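/- arXiv:1407.7292 — 2 statements merged into one kernel-verified Lean document; each statement's English description precedes it below -/
import Mathlib

section
/- Let Λ be a finite alphabet, T a vector tree of infinite height, and D a dense vector subset of T. For every finite Souslin measurable coloring of W^∞(Λ,T,D), the set of all maps from ⊗D into Λ with the product topology, and every subspace F of W^∞(Λ,T,D), there exists a further subspace F' ≤ F such that [F']_Λ is monochromatic. -/
set_option autoImplicit false

/-- A rooted, finitely branching, balanced tree of height `ω` with no maximal nodes,
modelled as a prefix-closed collection of finite sequences of natural numbers. -/
structure TreeT where
  mem : List ℕ → Prop
  root : mem []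
  pref : ∀ s n, mem (s ++ [n]) → mem s
  finBranch : ∀ s, mem s → {n : ℕ | mem (s ++ [n])}.Finite
  noMax : ∀ s, mem s → ∃ n, mem (s ++ [n])

variable {d : ℕ}

/-- Membership in the level product of a vector tree: all coordinates are nodes of the
respective trees and lie on a common level. -/
def InLP (V : Fin (d + 1) → TreeT) (t : Fin (d + 1) → List ℕ) : Prop :=
  (∀ i, (V i).mem (t i)) ∧ ∀ i, (t i).length = (t 0).length

/-- The level product `⊗T` of a vector tree. -/
def LP (V : Fin (d + 1) → TreeT) : Type :=
  {t : Fin (d + 1) → List ℕ // InLP V t}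

/-- The level of an element of the level product. -/
def lev {V : Fin (d + 1) → TreeT} (t : LP V) : ℕ := (t.1 0).length

/-- The coordinatewise (prefix) ordering on the level product. -/
def lpLE {V : Fin (d + 1) → TreeT} (t s : LP V) : Prop :=
  ∀ i, t.1 i <+: s.1 i

/-- The level set of a subset of the level product. -/
def levSet {V : Fin (d + 1) → TreeT} (A : Set (LP V)) : Set ℕ := lev '' A

/-- `t` is the minimum of `W` in the ordering of the level product. -/
def isMinOf {V : Fin (d + 1) → TreeT} (t : LP V) (W : Set (LP V)) : Prop :=
  t ∈ W ∧ ∀ s ∈ W, lpLE t s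

/-- A vector subset `D` of the vector tree `V`: componentwise subsets of the trees with a
common level set. -/
structure VecSub {d : ℕ} (V : Fin (d + 1) → TreeT) where
  sets : Fin (d + 1) → Set (List ℕ)
  mem : ∀ i, ∀ u ∈ sets i, (V i).mem u
  lvl : ∀ i j, {n : ℕ | ∃ u ∈ sets i, u.length = n} = {n : ℕ | ∃ u ∈ sets j, u.length = n}

variable {d : ℕ} {V : Fin (d + 1) → TreeT}

/-- The level set `L_T(D)` of a vector subset. -/
def VecSub.lvlSet (D : VecSub V) : Set ℕ := {n : ℕ | ∃ u ∈ D.sets 0, u.length = n}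

/-- The increasing enumeration `ℓ₀ < ℓ₁ < ⋯` of the level set of `D`. -/
noncomputable def VecSub.L (D : VecSub V) (k : ℕ) : ℕ := Nat.nth (· ∈ D.lvlSet) k

/-- `D` is a dense vector subset of `V`: its level set is infinite and, for every `k`,
`D` at level `ℓ_k` dominates the `k`-th level of `V` componentwise. -/
def VecSub.IsDense (D : VecSub V) : Prop :=
  D.lvlSet.Infinite ∧
  ∀ (k : ℕ) (i : Fin (d + 1)) (u : List ℕ), (V i).mem u → u.length = k →
    ∃ w ∈ D.sets i, w.length = D.L k ∧ u <+: w

/-- `D` is a `t`-dense vector subset: componentwise, `D_i ∩ suc_{T_i}(t_i)` is dense in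
the tree `suc_{T_i}(t_i)` of successors of `t_i`. -/
def VecSub.IsTDense (D : VecSub V) (t : LP V) : Prop :=
  ∀ i : Fin (d + 1),
    {n : ℕ | ∃ u ∈ D.sets i, t.1 i <+: u ∧ u.length = n}.Infinite ∧
    ∀ (k : ℕ) (u : List ℕ), (V i).mem u → t.1 i <+: u → u.length = (t.1 i).length + k →
      ∃ w ∈ D.sets i, t.1 i <+: w ∧
        w.length = Nat.nth (· ∈ {n : ℕ | ∃ u' ∈ D.sets i, t.1 i <+: u' ∧ u'.length = n}) k ∧
        u <+: w

/-- The level product `⊗D` of a vector subset, as a subset of `⊗T`. -/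
def lprod (D : VecSub V) : Set (LP V) := {t | ∀ i, t.1 i ∈ D.sets i}

/-- The restriction `D↾m` of `D` to its first `m` levels. -/
def VecSub.restr (D : VecSub V) (m : ℕ) : Fin (d + 1) → Set (List ℕ) :=
  fun i => {w ∈ D.sets i | ∃ k < m, w.length = D.L k}

/-- The part of `⊗D` lying on the first `m` levels of `D`. -/
def lprodUpto (D : VecSub V) (m : ℕ) : Set (LP V) :=
  {t ∈ lprod D | ∃ k < m, lev t = D.L k}

/-- The `n`-th level `⊗D(n)` of the level product of `D`. -/
def lprodAt (D : VecSub V) (n : ℕ) : Set (LP V) :=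
  {t ∈ lprod D | lev t = D.L n}

/-- The Souslin operation applied to a Souslin scheme indexed by finite sequences of
naturals. -/
def souslinOp {α : Type} (s : List ℕ → Set α) : Set α :=
  ⋃ σ : ℕ → ℕ, ⋂ n : ℕ, s ((List.range n).map σ)

/-- `A` is Souslin measurable with respect to the topology `τ`: it belongs to every
collection of sets that contains the open sets, is closed under complements and finite
unions (i.e. is an algebra), and is closed under the Souslin operation. -/
def SMeas {α : Type} (τ : TopologicalSpace α) (A : Set α) : Prop :=
  ∀ C : Set (Set α),
    (∀ U : Set α, τ.IsOpen U → U ∈ C) →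
    (∀ B ∈ C, Bᶜ ∈ C) →
    (∀ B B' : Set α, B ∈ C → B' ∈ C → B ∪ B' ∈ C) →
    (∀ s : List ℕ → Set α, (∀ l, s l ∈ C) → souslinOp s ∈ C) →
    A ∈ C

/-- A subspace `Q` of `W^∞(Λ,T)`: a map from `⊗T` into `Λ ∪ {v_t : t ∈ ⊗T}` together with
a dense vector subset `D` of `T` such that the variable `v_t` occurs iff `t ∈ ⊗D`, the
occurrence set of `v_t` is finite with minimum `t`, occurrence sets of variables at the
same level have the same level set, and occurrence sets of variables at strictly increasing
levels occupy strictly increasing blocks of levels. -/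
structure InfSubspace (Λ : Type) {d : ℕ} (V : Fin (d + 1) → TreeT) where
  Q : LP V → Λ ⊕ LP V
  D : VecSub V
  dense : D.IsDense
  varIff : ∀ t : LP V, (∃ x, Q x = Sum.inr t) ↔ t ∈ lprod D
  occFin : ∀ t ∈ lprod D, {x | Q x = Sum.inr t}.Finite
  occMin : ∀ t ∈ lprod D, Q t = Sum.inr t ∧ ∀ x, Q x = Sum.inr t → lpLE t x
  sameLev : ∀ t ∈ lprod D, ∀ t' ∈ lprod D, lev t = lev t' →
    levSet {x | Q x = Sum.inr t} = levSet {x | Q x = Sum.inr t'}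
  incLev : ∀ t ∈ lprod D, ∀ t' ∈ lprod D, lev t < lev t' →
    ∀ x y, Q x = Sum.inr t → Q y = Sum.inr t' → lev x < lev y

/-- The span `[Q]_Λ` of a subspace of `W^∞(Λ,T)`: all total maps `⊗T → Λ` obtained by
substituting letters for all the variables of `Q`. -/
def spanInf {Λ : Type} {d : ℕ} {V : Fin (d + 1) → TreeT} (Q : InfSubspace Λ V) :
    Set (LP V → Λ) :=
  {A | ∃ a : LP V → Λ, A = fun x => Sum.elim id a (Q.Q x)}

/-- The product topology on `W^∞(Λ,T)` coming from the discrete topology on `Λ`. -/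
def infTop (Λ : Type) {d : ℕ} (V : Fin (d + 1) → TreeT) :
    TopologicalSpace (LP V → Λ) :=
  @Pi.topologicalSpace (LP V) (fun _ => Λ) (fun _ => ⊥)

/-- The level product `⊗D`, as a type. -/
def lpD {d : ℕ} {V : Fin (d + 1) → TreeT} (D : VecSub V) : Type :=
  {t : LP V // t ∈ lprod D}

/-- The product topology on `W^∞(Λ,T,D)` coming from the discrete topology on `Λ`. -/
def infTopD (Λ : Type) {d : ℕ} {V : Fin (d + 1) → TreeT} (D : VecSub V) :
    TopologicalSpace (lpD D → Λ) :=
  @Pi.topologicalSpace (lpD D) (fun _ => Λ) (fun _ => ⊥)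

/-- A subspace `F` of `W^∞(Λ,T,D)`: the restriction to `⊗D` of a subspace `Q` of
`W^∞(Λ,T)` whose associated dense vector subset `D(Q)` is a vector subset of `D`. -/
structure DSubspace (Λ : Type) {d : ℕ} {V : Fin (d + 1) → TreeT} (D : VecSub V) where
  Q : InfSubspace Λ V
  sub : ∀ i, Q.D.sets i ⊆ D.sets i

/-- The span `[F]_Λ` of a subspace of `W^∞(Λ,T,D)`: the restrictions to `⊗D` of the
members of the span of the inducing subspace of `W^∞(Λ,T)`. -/
def spanD {Λ : Type} {d : ℕ} {V : Fin (d + 1) → TreeT} {D : VecSub V}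
    (F : DSubspace Λ D) : Set (lpD D → Λ) :=
  {B | ∃ A ∈ spanInf F.Q, B = fun t => A t.1}


namespace HJaux

-- tree level finiteness
theorem TreeT.levFinite (T : TreeT) : ∀ n, {u : List ℕ | T.mem u ∧ u.length = n}.Finite := by
  intro n
  induction n with
  | zero =>
    apply Set.Finite.subset (Set.finite_singleton ([] : List ℕ))
    rintro u ⟨-, hu⟩
    simp [List.length_eq_zero_iff.mp hu]
  | succ n ih =>
    have hsub : {u : List ℕ | T.mem u ∧ u.length = n + 1} ⊆
        ⋃ u' ∈ {u : List ℕ | T.mem u ∧ u.length = n},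
          (fun m => u' ++ [m]) '' {m | T.mem (u' ++ [m])} := by
      rintro u ⟨hm, hl⟩
      have hne : u ≠ [] := by intro h; simp [h] at hl
      have hu : u.dropLast ++ [u.getLast hne] = u := List.dropLast_append_getLast hne
      have h1 : u.dropLast ∈ {u : List ℕ | T.mem u ∧ u.length = n} :=
        ⟨T.pref _ _ (by rw [hu]; exact hm), by rw [List.length_dropLast, hl]; omega⟩
      exact Set.mem_biUnion h1 ⟨u.getLast hne, show T.mem _ by rw [hu]; exact hm, hu⟩
    exact Set.Finite.subset
      (Set.Finite.biUnion ih (fun u' hu' => Set.Finite.image _ (T.finBranch u' hu'.1))) hsub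

theorem TreeT.extend (T : TreeT) {u : List ℕ} (hu : T.mem u) :
    ∀ m, u.length ≤ m → ∃ w, T.mem w ∧ w.length = m ∧ u <+: w := by
  intro m hm
  induction m, hm using Nat.le_induction with
  | base => exact ⟨u, hu, rfl, List.prefix_refl u⟩
  | succ m hm ih =>
    obtain ⟨w, h1, h2, h3⟩ := ih
    obtain ⟨k, hk⟩ := T.noMax w h1
    exact ⟨w ++ [k], hk, by simp [h2], h3.trans (List.prefix_append _ _)⟩

theorem lpLevFinite (V : Fin (d+1) → TreeT) (n : ℕ) : {s : LP V | lev s = n}.Finite := by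
  have h1 : {s : LP V | lev s = n} ⊆
      Subtype.val ⁻¹' Set.pi Set.univ (fun i => {u | (V i).mem u ∧ u.length = n}) := by
    rintro s hs i -
    exact ⟨s.2.1 i, by rw [s.2.2 i]; exact hs⟩
  exact Set.Finite.subset
    (Set.Finite.preimage (Subtype.val_injective.injOn)
      (Set.Finite.pi (fun i => TreeT.levFinite (V i) n))) h1

theorem countMonoPred {p q : ℕ → Prop} [DecidablePred p] [DecidablePred q]
    (h : ∀ k, p k → q k) (n : ℕ) : Nat.count p n ≤ Nat.count q n := by
  rw [Nat.count_eq_card_filter_range, Nat.count_eq_card_filter_range]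
  apply Finset.card_le_card
  intro x hx
  simp only [Finset.mem_filter] at hx ⊢
  exact ⟨hx.1, h x hx.2⟩

theorem depRec {α : Type} (Q : ℕ → α → Prop) (R : ℕ → α → α → Prop) (a0 : α) (h0 : Q 0 a0)
    (hstep : ∀ n a, Q n a → ∃ a', Q (n+1) a' ∧ R n a a') :
    ∃ f : ℕ → α, f 0 = a0 ∧ (∀ n, Q n (f n)) ∧ (∀ n, R n (f n) (f (n+1))) := by
  choose! g hg1 hg2 using hstep
  refine ⟨fun n => Nat.rec a0 g n, rfl, ?_, ?_⟩
  · intro n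
    induction n with
    | zero => exact h0
    | succ n ih => exact hg1 n _ ih
  · intro n
    have hQ : ∀ m, Q m (Nat.rec a0 g m) := by
      intro m
      induction m with
      | zero => exact h0
      | succ m ih => exact hg1 m _ ih
    exact hg2 n _ (hQ n)


section Machinery

variable {Λ : Type} {D : VecSub V}

/-- Levels of members of the level product. -/
theorem lev_mem_lvlSet {DQ : VecSub V} {s : LP V} (hs : s ∈ lprod DQ) : lev s ∈ DQ.lvlSet :=
  ⟨s.1 0, hs 0, rfl⟩

/-- A *condition*: an infinite set of retained levels of `D(Q)` together with default
letters for the variables on non-retained levels. -/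
structure Cnd (F : DSubspace Λ D) where
  K : Set ℕ
  b : LP V → Λ
  hsub : K ⊆ F.Q.D.lvlSet
  hinf : K.Infinite

variable {F : DSubspace Λ D}

def Cnd.le (c' c : Cnd F) : Prop :=
  c'.K ⊆ c.K ∧ ∀ s ∈ lprod F.Q.D, lev s ∉ c.K → c'.b s = c.b s

theorem Cnd.le_refl (c : Cnd F) : c.le c := ⟨subset_rfl, fun _ _ _ => rfl⟩

theorem Cnd.le_trans {c1 c2 c3 : Cnd F} (h12 : c1.le c2) (h23 : c2.le c3) : c1.le c3 := by
  refine ⟨h12.1.trans h23.1, fun s hs hK => ?_⟩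
  rw [h12.2 s hs (fun h => hK (h23.1 h)), h23.2 s hs hK]

/-- The span of a condition. -/
def spC (c : Cnd F) : Set (lpD D → Λ) :=
  {B | ∃ a : LP V → Λ, (∀ s ∈ lprod F.Q.D, lev s ∉ c.K → a s = c.b s) ∧
    B = fun t => Sum.elim id a (F.Q.Q t.1)}

theorem spC_mono {c' c : Cnd F} (h : c'.le c) : spC c' ⊆ spC c := by
  rintro B ⟨a, ha, rfl⟩
  exact ⟨a, fun s hs hK => (ha s hs (fun h' => hK (h.1 h'))).trans (h.2 s hs hK), rfl⟩

theorem spC_subset_spanD (c : Cnd F) : spC c ⊆ spanD F := by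
  rintro B ⟨a, _, rfl⟩
  exact ⟨fun x => Sum.elim id a (F.Q.Q x), ⟨a, rfl⟩, rfl⟩

theorem spC_nonempty [Nonempty Λ] (c : Cnd F) : (spC c).Nonempty :=
  ⟨_, c.b, fun _ _ _ => rfl, rfl⟩

/-- Freezing the levels in `R` to the letters given by `ε`. -/
def cnd (c : Cnd F) (R : Finset ℕ) (ε : LP V → Λ) : Cnd F :=
  ⟨c.K \ ↑R, fun s => if lev s ∈ R then ε s else c.b s,
   fun n hn => c.hsub hn.1, c.hinf.diff R.finite_toSet⟩

theorem cnd_le_self {c : Cnd F} {R : Finset ℕ} (hRK : ↑R ⊆ c.K) (ε : LP V → Λ) :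
    (cnd c R ε).le c := by
  refine ⟨Set.diff_subset, fun s hs hK => ?_⟩
  have hR : lev s ∉ R := fun h => hK (hRK h)
  simp only [cnd, if_neg hR]

theorem cnd_mono {c' c : Cnd F} {R R' : Finset ℕ} (h : c'.le c) (hR : R ⊆ R')
    (hR' : ↑R' ⊆ c'.K) (ε : LP V → Λ) : (cnd c' R' ε).le (cnd c R ε) := by
  constructor
  · rintro n ⟨hn1, hn2⟩
    exact ⟨h.1 hn1, fun hn => hn2 (hR hn)⟩
  · intro s hs hK
    simp only [cnd, Set.mem_diff, not_and, not_not] at hK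
    by_cases hlev : lev s ∈ R
    · simp only [cnd, if_pos hlev, if_pos (hR hlev)]
    · have hKc : lev s ∉ c.K := by
        intro hc
        have := hK hc
        exact hlev this
      have hR'c : lev s ∉ R' := fun hh => hKc (h.1 (hR' hh))
      simp only [cnd, if_neg hlev, if_neg hR'c]
      exact h.2 s hs hKc

theorem selfBox {c : Cnd F} (R : Finset ℕ) {B : lpD D → Λ} {a : LP V → Λ}
    (ha : ∀ s ∈ lprod F.Q.D, lev s ∉ c.K → a s = c.b s)
    (hB : B = fun t => Sum.elim id a (F.Q.Q t.1)) : B ∈ spC (cnd c R a) := by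
  refine ⟨a, fun s hs hK => ?_, hB⟩
  by_cases hlev : lev s ∈ R
  · simp only [cnd, if_pos hlev]
  · simp only [cnd, Set.mem_diff, not_and, not_not] at hK
    have hKc : lev s ∉ c.K := fun hc => hlev (hK hc)
    simp only [cnd, if_neg hlev]
    exact ha s hs hKc

theorem beq_le {c c' : Cnd F} (hK : c.K = c'.K)
    (hb : ∀ s ∈ lprod F.Q.D, c.b s = c'.b s) : c.le c' :=
  ⟨hK.le, fun s hs _ => hb s hs⟩

theorem cnd_congr_le (c : Cnd F) (R : Finset ℕ) {ε ε' : LP V → Λ}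
    (h : ∀ s ∈ lprod F.Q.D, lev s ∈ R → ε s = ε' s) : (cnd c R ε).le (cnd c R ε') := by
  refine beq_le rfl (fun s hs => ?_)
  by_cases hlev : lev s ∈ R
  · simp only [cnd, if_pos hlev]
    exact h s hs hlev
  · simp only [cnd, if_neg hlev]

/-- Decidable sets: those that every condition can shrink into or away from. -/
def Dec (F : DSubspace Λ D) (S : Set (lpD D → Λ)) : Prop :=
  ∀ P : Cnd F, ∃ Q : Cnd F, Q.le P ∧ (spC Q ⊆ S ∨ spC Q ∩ S = ∅)

end Machinery

section Freeze

variable {Λ : Type} {D : VecSub V} {F : DSubspace Λ D}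

/-- The vector subset of the retained levels. -/
def freezeVS (F : DSubspace Λ D) (c : Cnd F) : VecSub V where
  sets i := {u | u ∈ F.Q.D.sets i ∧ u.length ∈ c.K}
  mem i u hu := F.Q.D.mem i u hu.1
  lvl i j := by
    have key : ∀ i j : Fin (d+1), {n : ℕ | ∃ u ∈ {u | u ∈ F.Q.D.sets i ∧ u.length ∈ c.K}, u.length = n}
        ⊆ {n : ℕ | ∃ u ∈ {u | u ∈ F.Q.D.sets j ∧ u.length ∈ c.K}, u.length = n} := by
      rintro i j n ⟨u, ⟨hu, hK⟩, hlen⟩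
      have h1 : n ∈ {n | ∃ u ∈ F.Q.D.sets i, u.length = n} := ⟨u, hu, hlen⟩
      rw [F.Q.D.lvl i j] at h1
      obtain ⟨w, hw, hwl⟩ := h1
      exact ⟨w, ⟨hw, by rw [hwl, ← hlen]; exact hK⟩, hwl⟩
    exact Set.Subset.antisymm (key i j) (key j i)

theorem freezeVS_lvlSet (c : Cnd F) : (freezeVS F c).lvlSet = c.K := by
  ext n
  constructor
  · rintro ⟨u, ⟨hu, hK⟩, hlen⟩
    rw [← hlen]; exact hK
  · intro hn
    obtain ⟨u, hu, hlen⟩ := c.hsub hn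
    exact ⟨u, ⟨hu, by rw [hlen]; exact hn⟩, hlen⟩

theorem freeze_lprod_sub (c : Cnd F) : lprod (freezeVS F c) ⊆ lprod F.Q.D :=
  fun t ht i => (ht i).1

theorem freeze_lev_mem (c : Cnd F) {s : LP V} (hs : s ∈ lprod (freezeVS F c)) :
    lev s ∈ c.K := (hs 0).2

theorem freezeVS_dense (c : Cnd F) : (freezeVS F c).IsDense := by
  constructor
  · rw [freezeVS_lvlSet]; exact c.hinf
  · intro k i u hmem hlen
    have hLK : (freezeVS F c).L k = Nat.nth (· ∈ c.K) k := by
      unfold VecSub.L; rw [freezeVS_lvlSet]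
    classical
    set nstar := Nat.nth (· ∈ c.K) k with hn
    have hnK : nstar ∈ c.K := Nat.nth_mem_of_infinite c.hinf k
    have hnlvl : nstar ∈ F.Q.D.lvlSet := c.hsub hnK
    set m := Nat.count (· ∈ F.Q.D.lvlSet) nstar with hm
    have hLm : F.Q.D.L m = nstar := Nat.nth_count hnlvl
    have hkm : k ≤ m := by
      have h1 : Nat.count (· ∈ c.K) nstar = k := Nat.count_nth_of_infinite (p := (· ∈ c.K)) c.hinf k
      have h2 : Nat.count (· ∈ c.K) nstar ≤ m :=
        countMonoPred (fun x hx => c.hsub hx) nstar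
      omega
    obtain ⟨w0, hw01, hw02, hw03⟩ := TreeT.extend (V i) hmem m (by omega)
    obtain ⟨w, hw1, hw2, hw3⟩ := F.Q.dense.2 m i w0 hw01 hw02
    refine ⟨w, ⟨hw1, by rw [hw2, hLm]; exact hnK⟩, by rw [hLK, hw2, hLm], hw03.trans hw3⟩

open Classical in
/-- The map of the frozen subspace. -/
noncomputable def freezeQ (F : DSubspace Λ D) (c : Cnd F) : LP V → Λ ⊕ LP V := fun x =>
  Sum.elim Sum.inl
    (fun t => if t ∈ lprod (freezeVS F c) then Sum.inr t else Sum.inl (c.b t))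
    (F.Q.Q x)

theorem freezeQ_eq_inr {c : Cnd F} {x t : LP V} :
    freezeQ F c x = Sum.inr t ↔ (F.Q.Q x = Sum.inr t ∧ t ∈ lprod (freezeVS F c)) := by
  classical
  unfold freezeQ
  cases h : F.Q.Q x with
  | inl a => simp
  | inr s =>
    simp only [Sum.elim_inr]
    by_cases hs : s ∈ lprod (freezeVS F c)
    · rw [if_pos hs]
      constructor
      · intro h'
        obtain rfl : s = t := by injection h'
        exact ⟨rfl, hs⟩
      · exact fun h' => h'.1 ▸ rfl
    · rw [if_neg hs]
      constructor
      · intro h'; exact absurd h' (by simp)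
      · rintro ⟨h1, h2⟩
        obtain rfl : s = t := by injection h1
        exact absurd h2 hs

theorem freeze_occEq (c : Cnd F) {t : LP V} (ht : t ∈ lprod (freezeVS F c)) :
    {x | freezeQ F c x = Sum.inr t} = {x | F.Q.Q x = Sum.inr t} := by
  ext x
  rw [Set.mem_setOf_eq, Set.mem_setOf_eq, freezeQ_eq_inr]
  exact ⟨fun h => h.1, fun h => ⟨h, ht⟩⟩

/-- The frozen subspace as a `DSubspace`. -/
noncomputable def freezeSub (F : DSubspace Λ D) (c : Cnd F) : DSubspace Λ D where
  Q :=
  { Q := freezeQ F c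
    D := freezeVS F c
    dense := freezeVS_dense c
    varIff := by
      intro t
      constructor
      · rintro ⟨x, hx⟩
        exact (freezeQ_eq_inr.mp hx).2
      · intro ht
        exact ⟨t, freezeQ_eq_inr.mpr ⟨(F.Q.occMin t (freeze_lprod_sub c ht)).1, ht⟩⟩
    occFin := by
      intro t ht
      rw [freeze_occEq c ht]
      exact F.Q.occFin t (freeze_lprod_sub c ht)
    occMin := by
      intro t ht
      refine ⟨freezeQ_eq_inr.mpr ⟨(F.Q.occMin t (freeze_lprod_sub c ht)).1, ht⟩, ?_⟩
      intro x hx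
      exact (F.Q.occMin t (freeze_lprod_sub c ht)).2 x (freezeQ_eq_inr.mp hx).1
    sameLev := by
      intro t ht t' ht' hlev
      rw [freeze_occEq c ht, freeze_occEq c ht']
      exact F.Q.sameLev t (freeze_lprod_sub c ht) t' (freeze_lprod_sub c ht') hlev
    incLev := by
      intro t ht t' ht' hlev x y hx hy
      exact F.Q.incLev t (freeze_lprod_sub c ht) t' (freeze_lprod_sub c ht') hlev x y
        (freezeQ_eq_inr.mp hx).1 (freezeQ_eq_inr.mp hy).1 }
  sub := fun i u hu => F.sub i hu.1

theorem freeze_spanD_sub (c : Cnd F) : spanD (freezeSub F c) ⊆ spC c := by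
  rintro B ⟨A, ⟨a', rfl⟩, rfl⟩
  classical
  refine ⟨fun s => if s ∈ lprod (freezeVS F c) then a' s else c.b s, ?_, ?_⟩
  · intro s hs hK
    show (if s ∈ lprod (freezeVS F c) then a' s else c.b s) = c.b s
    rw [if_neg (fun h => hK (freeze_lev_mem c h))]
  · funext t
    show Sum.elim id a' (freezeSub F c |>.Q.Q t.1) = _
    have : (freezeSub F c).Q.Q t.1 = freezeQ F c t.1 := rfl
    rw [this]
    unfold freezeQ
    cases h : F.Q.Q t.1 with
    | inl v => simp
    | inr s =>
      by_cases hs : s ∈ lprod (freezeVS F c)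
      · simp [hs]
      · simp [hs]

end Freeze

section Boxes

variable {Λ : Type} {D : VecSub V} {F : DSubspace Λ D}

/-- The variables living on the levels in `R`. -/
def RVars (F : DSubspace Λ D) (R : Finset ℕ) : Set (LP V) :=
  {s | s ∈ lprod F.Q.D ∧ lev s ∈ R}

theorem RVars_finite (R : Finset ℕ) : (RVars F R).Finite := by
  have hsub : RVars F R ⊆ ⋃ n ∈ (↑R : Set ℕ), {s : LP V | lev s = n} := by
    rintro s ⟨hs, hlev⟩
    exact Set.mem_biUnion hlev rfl
  exact Set.Finite.subset (Set.Finite.biUnion R.finite_toSet (fun n _ => lpLevFinite V n)) hsub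

open Classical in
noncomputable def extFn [Nonempty Λ] (F : DSubspace Λ D) (R : Finset ℕ)
    (g : ↥(RVars F R) → Λ) : LP V → Λ :=
  fun s => if h : s ∈ RVars F R then g ⟨s, h⟩ else Classical.arbitrary Λ

noncomputable def restr (F : DSubspace Λ D) (R : Finset ℕ) (ε : LP V → Λ) :
    ↥(RVars F R) → Λ := fun s => ε s.1

theorem extFn_restr [Nonempty Λ] (R : Finset ℕ) (ε : LP V → Λ) :
    ∀ s ∈ lprod F.Q.D, lev s ∈ R → extFn F R (restr F R ε) s = ε s := by
  intro s hs hlev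
  have h : s ∈ RVars F R := ⟨hs, hlev⟩
  simp [extFn, h, restr]

theorem extFn_agrees [Nonempty Λ] (R : Finset ℕ) (g : ↥(RVars F R) → Λ)
    {s : LP V} (h : s ∈ RVars F R) : extFn F R g s = g ⟨s, h⟩ := by
  simp [extFn, h]

/-- Globalization: a shrinking of a single box can be realized by a global condition. -/
theorem glob (P : Cnd F) (R : Finset ℕ) (hR : ↑R ⊆ P.K) (ε : LP V → Λ) (Z : Cnd F)
    (hZ : Z.le (cnd P R ε)) :
    ∃ P2 : Cnd F, P2.le P ∧ ↑R ⊆ P2.K ∧ (cnd P2 R ε).le Z ∧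
      ∀ ε', (cnd P2 R ε').le (cnd P R ε') := by
  classical
  have hZK : Z.K ⊆ P.K \ ↑R := hZ.1
  have hbz : ∀ s ∈ lprod F.Q.D, lev s ∉ P.K → Z.b s = P.b s := by
    intro s hs hK
    have h1 := hZ.2 s hs (fun hh => hK hh.1)
    rw [h1]
    show (if lev s ∈ R then ε s else P.b s) = P.b s
    rw [if_neg (show ¬ lev s ∈ R from fun hh => hK (hR hh))]
  refine ⟨⟨Z.K ∪ ↑R, fun s => if lev s ∈ R then P.b s else Z.b s,
    Set.union_subset Z.hsub (hR.trans P.hsub), Z.hinf.mono Set.subset_union_left⟩,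
    ⟨Set.union_subset (hZK.trans Set.diff_subset) hR, ?_⟩, Set.subset_union_right, ⟨?_, ?_⟩, ?_⟩
  · intro s hs hK
    show (if lev s ∈ R then P.b s else Z.b s) = P.b s
    rw [if_neg (show ¬ lev s ∈ R from fun hh => hK (hR hh))]
    exact hbz s hs hK
  · rintro n ⟨hn1, hn2⟩
    rcases hn1 with hn1 | hn1
    · exact hn1
    · exact absurd hn1 hn2
  · intro s hs hK
    show (if lev s ∈ R then ε s else (if lev s ∈ R then P.b s else Z.b s)) = Z.b s
    by_cases hlev : lev s ∈ R
    · rw [if_pos hlev]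
      have h1 := hZ.2 s hs (fun hh => hh.2 hlev)
      rw [h1]
      show ε s = (if lev s ∈ R then ε s else P.b s)
      rw [if_pos hlev]
    · rw [if_neg hlev, if_neg hlev]
  · intro ε'
    constructor
    · rintro n ⟨hn1, hn2⟩
      rcases hn1 with hn1 | hn1
      · exact ⟨(hZK hn1).1, hn2⟩
      · exact absurd hn1 hn2
    · intro s hs hK
      simp only [cnd, Set.mem_diff, not_and, not_not] at hK
      by_cases hlev : lev s ∈ R
      · show (if lev s ∈ R then ε' s else _) = (if lev s ∈ R then ε' s else _)
        rw [if_pos hlev, if_pos hlev]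
      · have hKc : lev s ∉ P.K := fun hc => hlev (hK hc)
        show (if lev s ∈ R then ε' s else (if lev s ∈ R then P.b s else Z.b s))
            = (if lev s ∈ R then ε' s else P.b s)
        rw [if_neg hlev, if_neg hlev, if_neg hlev]
        exact hbz s hs hKc

/-- Simultaneous handling of all the finitely many boxes over `R`. -/
theorem boxLemma [Finite Λ] [Nonempty Λ] (P : Cnd F) (R : Finset ℕ) (hR : ↑R ⊆ P.K)
    (ψ : (LP V → Λ) → Cnd F → Prop)
    (hdown : ∀ ε c c', Cnd.le c' c → ψ ε c → ψ ε c')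
    (hach : ∀ ε (Z : Cnd F), Z.le (cnd P R ε) → ∃ Z', Z'.le Z ∧ ψ ε Z') :
    ∃ P' : Cnd F, P'.le P ∧ ↑R ⊆ P'.K ∧
      ∀ g : ↥(RVars F R) → Λ, ψ (extFn F R g) (cnd P' R (extFn F R g)) := by
  classical
  have hfinRV : Finite ↥(RVars F R) := (RVars_finite R).to_subtype
  have hfin : (Set.univ : Set (↥(RVars F R) → Λ)).Finite := Set.finite_univ
  suffices h : ∃ P' : Cnd F, P'.le P ∧ ↑R ⊆ P'.K ∧
      ∀ g ∈ (Set.univ : Set (↥(RVars F R) → Λ)), ψ (extFn F R g) (cnd P' R (extFn F R g)) by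
    obtain ⟨P', h1, h2, h3⟩ := h
    exact ⟨P', h1, h2, fun g => h3 g (Set.mem_univ g)⟩
  refine Set.Finite.induction_on (motive := fun S _ => ∃ P' : Cnd F, P'.le P ∧ ↑R ⊆ P'.K ∧
      ∀ g ∈ S, ψ (extFn F R g) (cnd P' R (extFn F R g))) _ hfin ⟨P, Cnd.le_refl P, hR, fun g hg => absurd hg (Set.notMem_empty g)⟩ ?_
  rintro g S hgS hS ⟨P1, hP1, hRK1, hg1⟩
  obtain ⟨Z', hZ'le, hZ'ψ⟩ := hach (extFn F R g) (cnd P1 R (extFn F R g))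
    (cnd_mono hP1 (subset_refl R) hRK1 _)
  obtain ⟨P2, hP2le, hRK2, hcndle, hall⟩ := glob P1 R hRK1 (extFn F R g) Z' hZ'le
  refine ⟨P2, Cnd.le_trans hP2le hP1, hRK2, ?_⟩
  rintro g' (rfl | hg')
  · exact hdown _ _ _ hcndle hZ'ψ
  · exact hdown _ _ _ (hall (extFn F R g')) (hg1 g' hg')

end Boxes

section DecLemmas

variable {Λ : Type} {D : VecSub V} {F : DSubspace Λ D}

theorem Dec.compl {S : Set (lpD D → Λ)} (h : Dec F S) : Dec F Sᶜ := by
  intro P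
  obtain ⟨Q, h1, h2⟩ := h P
  refine ⟨Q, h1, ?_⟩
  rcases h2 with h2 | h2
  · right
    rw [Set.eq_empty_iff_forall_notMem]
    rintro x ⟨hx1, hx2⟩
    exact hx2 (h2 hx1)
  · left
    intro x hx hxS
    rw [Set.eq_empty_iff_forall_notMem] at h2
    exact h2 x ⟨hx, hxS⟩

theorem Dec.union {S S' : Set (lpD D → Λ)} (h : Dec F S) (h' : Dec F S') :
    Dec F (S ∪ S') := by
  intro P
  obtain ⟨Q1, hQ1, h2⟩ := h P
  rcases h2 with h2 | h2
  · exact ⟨Q1, hQ1, Or.inl (h2.trans Set.subset_union_left)⟩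
  · obtain ⟨Q2, hQ2, h3⟩ := h' Q1
    rcases h3 with h3 | h3
    · exact ⟨Q2, Cnd.le_trans hQ2 hQ1, Or.inl (h3.trans Set.subset_union_right)⟩
    · refine ⟨Q2, Cnd.le_trans hQ2 hQ1, Or.inr ?_⟩
      rw [Set.eq_empty_iff_forall_notMem]
      rintro x ⟨hx, hxU⟩
      rcases hxU with hxS | hxS'
      · rw [Set.eq_empty_iff_forall_notMem] at h2
        exact h2 x ⟨spC_mono hQ2 hx, hxS⟩
      · rw [Set.eq_empty_iff_forall_notMem] at h3
        exact h3 x ⟨hx, hxS'⟩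

theorem Dec.isOpen {S : Set (lpD D → Λ)} (hS : (infTopD Λ D).IsOpen S) : Dec F S := by
  classical
  intro P
  by_cases hmeet : (spC P ∩ S).Nonempty
  · obtain ⟨B0, hB0span, hB0S⟩ := hmeet
    obtain ⟨a0, ha0, rfl⟩ := hB0span
    letI : TopologicalSpace Λ := ⊥
    have hS' : IsOpen S := hS
    obtain ⟨I, u, hu, hsub⟩ := isOpen_pi_iff.mp hS' _ hB0S
    set R : Finset ℕ := I.biUnion (fun t =>
      Sum.elim (fun _ => (∅ : Finset ℕ))
        (fun s => if lev s ∈ P.K then {lev s} else ∅) (F.Q.Q t.1)) with hRdef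
    have hR : ↑R ⊆ P.K := by
      intro n hn
      simp only [hRdef, Finset.coe_biUnion, Set.mem_iUnion, Finset.mem_coe] at hn
      obtain ⟨t, ht, hn⟩ := hn
      cases h : F.Q.Q t.1 with
      | inl v => rw [h] at hn; simp at hn
      | inr s =>
        rw [h] at hn
        simp only [Sum.elim_inr] at hn
        by_cases hPK : lev s ∈ P.K
        · rw [if_pos hPK] at hn
          simp only [Finset.mem_singleton] at hn
          rwa [hn]
        · rw [if_neg hPK] at hn
          simp at hn
    have hkey : ∀ t ∈ I, ∀ s : LP V, F.Q.Q t.1 = Sum.inr s → lev s ∈ P.K → lev s ∈ R := by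
      intro t ht s hQ hPK
      simp only [hRdef, Finset.mem_biUnion]
      exact ⟨t, ht, by rw [hQ]; simp [hPK]⟩
    refine ⟨cnd P R a0, cnd_le_self hR a0, Or.inl ?_⟩
    rintro B ⟨a, ha, rfl⟩
    apply hsub
    intro t ht
    suffices hBt : Sum.elim id a (F.Q.Q t.1) = Sum.elim id a0 (F.Q.Q t.1) by
      show Sum.elim id a (F.Q.Q t.1) ∈ u t
      rw [hBt]
      exact (hu t ht).2
    cases h : F.Q.Q t.1 with
    | inl v => rfl
    | inr s =>
      simp only [Sum.elim_inr]
      have hsvar : s ∈ lprod F.Q.D := (F.Q.varIff s).mp ⟨t.1, h⟩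
      by_cases hPK : lev s ∈ P.K
      · have hsR : lev s ∈ R := hkey t ht s h hPK
        have h1 := ha s hsvar (fun hh => hh.2 hsR)
        rw [h1]
        show (if lev s ∈ R then a0 s else P.b s) = a0 s
        rw [if_pos hsR]

      · have h1 := ha s hsvar (fun hh => hPK hh.1)
        have h2 := ha0 s hsvar hPK
        rw [h1, h2]
        show (if lev s ∈ R then a0 s else P.b s) = P.b s
        rw [if_neg (show ¬ lev s ∈ R from fun hh => hPK (hR hh))]
  · refine ⟨P, Cnd.le_refl P, Or.inr ?_⟩
    rw [Set.not_nonempty_iff_eq_empty] at hmeet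
    exact hmeet

end DecLemmas

section Fusion

variable {Λ : Type} {D : VecSub V} {F : DSubspace Λ D}

/-- The fusion limit of a decreasing sequence of conditions with growing reservations. -/
theorem limitCnd (f : ℕ → Cnd F × Finset ℕ)
    (hdec : ∀ n, (f (n+1)).1.le (f n).1)
    (hRm : ∀ n, (f n).2 ⊆ (f (n+1)).2)
    (hRK : ∀ n, ↑(f n).2 ⊆ (f n).1.K)
    (hcard : ∀ n, n ≤ (f n).2.card) :
    ∃ P : Cnd F, (∀ n, P.le (f n).1) ∧ ∀ n, ↑(f n).2 ⊆ P.K := by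
  classical
  have hchain : ∀ {n m}, n ≤ m → (f m).1.le (f n).1 := by
    intro n m h
    induction m, h using Nat.le_induction with
    | base => exact Cnd.le_refl _
    | succ m hm ih => exact Cnd.le_trans (hdec m) ih
  have hKmono : ∀ {n m}, n ≤ m → (f m).1.K ⊆ (f n).1.K := fun h => (hchain h).1
  have hRchain : ∀ {n m}, n ≤ m → (f n).2 ⊆ (f m).2 := by
    intro n m h
    induction m, h using Nat.le_induction with
    | base => exact subset_refl _
    | succ m hm ih => exact ih.trans (hRm m)
  have hKsub : (⋃ n, ↑(f n).2 : Set ℕ) ⊆ F.Q.D.lvlSet := by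
    intro x hx
    simp only [Set.mem_iUnion, Finset.mem_coe] at hx
    obtain ⟨n, hn⟩ := hx
    exact (f n).1.hsub (hRK n hn)
  have hKn : ∀ n, (⋃ m, ↑(f m).2 : Set ℕ) ⊆ (f n).1.K := by
    intro n x hx
    simp only [Set.mem_iUnion, Finset.mem_coe] at hx
    obtain ⟨m, hm⟩ := hx
    rcases le_total n m with h | h
    · exact hKmono h (hRK m hm)
    · exact hRK n (hRchain h hm)
  have hKinf : (⋃ n, ↑(f n).2 : Set ℕ).Infinite := by
    intro hfin
    have hsub : ∀ n, (f n).2 ⊆ hfin.toFinset := by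
      intro n x hx
      rw [Set.Finite.mem_toFinset]
      exact Set.mem_iUnion.mpr ⟨n, Finset.mem_coe.mpr hx⟩
    have h1 := Finset.card_le_card (hsub (hfin.toFinset.card + 1))
    have h2 := hcard (hfin.toFinset.card + 1)
    omega
  have hbstab : ∀ (s : LP V), s ∈ lprod F.Q.D → ∀ {n m}, n ≤ m → lev s ∉ (f n).1.K →
      (f m).1.b s = (f n).1.b s := by
    intro s hs n m h hK
    exact (hchain h).2 s hs hK
  refine ⟨⟨⋃ n, ↑(f n).2,
    fun s => if h : ∃ n, lev s ∉ (f n).1.K then (f (Nat.find h)).1.b s else (f 0).1.b s,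
    hKsub, hKinf⟩, ?_, ?_⟩
  · intro n
    refine ⟨hKn n, ?_⟩
    intro s hs hsK
    have hex : ∃ m, lev s ∉ (f m).1.K := ⟨n, hsK⟩
    show (if h : ∃ m, lev s ∉ (f m).1.K then (f (Nat.find h)).1.b s else (f 0).1.b s)
      = (f n).1.b s
    rw [dif_pos hex]
    have hfind : Nat.find hex ≤ n := Nat.find_min' hex hsK
    exact (hbstab s hs hfind (Nat.find_spec hex)).symm
  · intro n x hx
    exact Set.mem_iUnion.mpr ⟨n, hx⟩

/-- Countably many completely avoidable sets can be simultaneously avoided. -/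
theorem sigmaAvoid [Finite Λ] [Nonempty Λ] (Z : Cnd F) (X : ℕ → Set (lpD D → Λ))
    (h : ∀ j, ∀ W : Cnd F, W.le Z → ∃ W', W'.le W ∧ spC W' ∩ X j = ∅) :
    ∃ W : Cnd F, W.le Z ∧ spC W ∩ (⋃ j, X j) = ∅ := by
  classical
  have h0 : (fun n (st : Cnd F × Finset ℕ) =>
      st.1.le Z ∧ ↑st.2 ⊆ st.1.K ∧ n ≤ st.2.card ∧
        ∀ i < n, ∀ ε, spC (cnd st.1 st.2 ε) ∩ X i = ∅) 0 (Z, ∅) := by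
    refine ⟨Cnd.le_refl Z, by simp, by simp, fun i hi => absurd hi (Nat.not_lt_zero i)⟩
  have hstep : ∀ n st, (fun n (st : Cnd F × Finset ℕ) =>
      st.1.le Z ∧ ↑st.2 ⊆ st.1.K ∧ n ≤ st.2.card ∧
        ∀ i < n, ∀ ε, spC (cnd st.1 st.2 ε) ∩ X i = ∅) n st →
      ∃ st', (fun n (st : Cnd F × Finset ℕ) =>
      st.1.le Z ∧ ↑st.2 ⊆ st.1.K ∧ n ≤ st.2.card ∧
        ∀ i < n, ∀ ε, spC (cnd st.1 st.2 ε) ∩ X i = ∅) (n+1) st' ∧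
      (fun (_ : ℕ) (st st' : Cnd F × Finset ℕ) => st'.1.le st.1 ∧ st.2 ⊆ st'.2) n st st' := by
    rintro n ⟨P, R⟩ ⟨hle, hRK, hcard, hprev⟩
    dsimp only at hle hRK hcard hprev ⊢
    obtain ⟨k, hk⟩ := (P.hinf.diff R.finite_toSet).nonempty
    have hkK : k ∈ P.K := hk.1
    have hkR : k ∉ R := fun hh => hk.2 (Finset.mem_coe.mpr hh)
    have hR'K : ↑(insert k R) ⊆ P.K := by
      intro x hx
      simp only [Finset.coe_insert, Set.mem_insert_iff] at hx
      rcases hx with rfl | hx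
      · exact hkK
      · exact hRK hx
    obtain ⟨P', hP'le, hP'R, hP'box⟩ := boxLemma P (insert k R) hR'K
      (fun _ c => spC c ∩ X n = ∅)
      (fun ε c c' hle' hψ => by
        show spC c' ∩ X n = ∅
        have hψ' : spC c ∩ X n = ∅ := hψ
        rw [Set.eq_empty_iff_forall_notMem] at hψ' ⊢
        rintro x ⟨hx1, hx2⟩
        exact hψ' x ⟨spC_mono hle' hx1, hx2⟩)
      (fun ε W hW => h n W (Cnd.le_trans hW (Cnd.le_trans (cnd_le_self hR'K ε) hle)))
    refine ⟨(P', insert k R), ⟨Cnd.le_trans hP'le hle, hP'R, ?_, ?_⟩,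
      hP'le, Finset.subset_insert k R⟩
    · rw [Finset.card_insert_of_notMem hkR]
      omega
    · intro i hi ε
      by_cases hin : i = n
      · subst hin
        have hrep := hP'box (restr F (insert k R) ε)
        have hagree : ∀ s ∈ lprod F.Q.D, lev s ∈ insert k R →
            ε s = extFn F (insert k R) (restr F (insert k R) ε) s :=
          fun s hs hlev => (extFn_restr (insert k R) ε s hs hlev).symm
        have hle2 := cnd_congr_le P' (insert k R) hagree
        rw [Set.eq_empty_iff_forall_notMem] at hrep ⊢
        rintro x ⟨hx1, hx2⟩
        exact hrep x ⟨spC_mono hle2 hx1, hx2⟩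
      · have hi' : i < n := by omega
        have hprior := hprev i hi' ε
        have hle2 : (cnd P' (insert k R) ε).le (cnd P R ε) :=
          cnd_mono hP'le (Finset.subset_insert k R) hP'R ε
        rw [Set.eq_empty_iff_forall_notMem] at hprior ⊢
        rintro x ⟨hx1, hx2⟩
        exact hprior x ⟨spC_mono hle2 hx1, hx2⟩
  obtain ⟨f, hf0, hfValid, hfRel⟩ := depRec _ _ (Z, (∅ : Finset ℕ)) h0 hstep
  obtain ⟨Pinf, hPinfle, hPinfR⟩ := limitCnd f
    (fun n => (hfRel n).1) (fun n => (hfRel n).2)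
    (fun n => (hfValid n).2.1) (fun n => (hfValid n).2.2.1)
  have hPZ : Pinf.le Z := by
    have h1 := hPinfle 0
    rw [hf0] at h1
    exact h1
  refine ⟨Pinf, hPZ, ?_⟩
  rw [Set.eq_empty_iff_forall_notMem]
  rintro x ⟨hx, hxU⟩
  obtain ⟨j, hj⟩ := Set.mem_iUnion.mp hxU
  obtain ⟨a, ha, hxB⟩ := hx
  have hself : x ∈ spC (cnd Pinf (f (j+1)).2 a) := selfBox _ ha hxB
  have hle2 : (cnd Pinf (f (j+1)).2 a).le (cnd (f (j+1)).1 (f (j+1)).2 a) :=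
    cnd_mono (hPinfle (j+1)) (subset_refl _) (hPinfR (j+1)) a
  have hempty := (hfValid (j+1)).2.2.2 j (by omega) a
  rw [Set.eq_empty_iff_forall_notMem] at hempty
  exact hempty x ⟨spC_mono hle2 hself, hj⟩

end Fusion

section Souslin

variable {Λ : Type} {D : VecSub V} {F : DSubspace Λ D}

/-- The localized Souslin operation at node `l`. -/
def Asl (sc : List ℕ → Set (lpD D → Λ)) (l : List ℕ) : Set (lpD D → Λ) :=
  ⋃ σ : ℕ → ℕ, ⋂ n : ℕ, sc (l ++ (List.range n).map σ)

/-- `c` is nowhere avoidable for `Asl sc l`. -/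
def NW (sc : List ℕ → Set (lpD D → Λ)) (c : Cnd F) (l : List ℕ) : Prop :=
  ∀ c' : Cnd F, c'.le c → (spC c' ∩ Asl sc l).Nonempty

theorem NW_mono {sc : List ℕ → Set (lpD D → Λ)} {c c' : Cnd F} {l : List ℕ}
    (hle : c'.le c) (h : NW sc c l) : NW sc c' l :=
  fun c'' h'' => h c'' (Cnd.le_trans h'' hle)

theorem Asl_nil (sc : List ℕ → Set (lpD D → Λ)) : Asl sc [] = souslinOp sc := by
  simp [Asl, souslinOp]

theorem Asl_subset (sc : List ℕ → Set (lpD D → Λ)) (l : List ℕ) : Asl sc l ⊆ sc l := by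
  rintro x hx
  obtain ⟨σ, hσ⟩ := Set.mem_iUnion.mp hx
  have h0 := Set.mem_iInter.mp hσ 0
  simpa using h0

theorem Asl_succ (sc : List ℕ → Set (lpD D → Λ)) (l : List ℕ) :
    Asl sc l ⊆ ⋃ m : ℕ, Asl sc (l ++ [m]) := by
  rintro x hx
  obtain ⟨σ, hσ⟩ := Set.mem_iUnion.mp hx
  rw [Set.mem_iUnion]
  refine ⟨σ 0, Set.mem_iUnion.mpr ⟨fun n => σ (n+1), Set.mem_iInter.mpr (fun n => ?_)⟩⟩
  have h1 := Set.mem_iInter.mp hσ (n+1)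
  have heq : l ++ [σ 0] ++ (List.range n).map (fun k => σ (k+1)) =
      l ++ (List.range (n+1)).map σ := by
    rw [List.range_succ_eq_map, List.append_assoc]
    simp [List.map_map, Function.comp]
  rw [heq]
  exact h1

theorem Dec.souslin [Finite Λ] [Nonempty Λ] (sc : List ℕ → Set (lpD D → Λ))
    (hsc : ∀ l, Dec F (sc l)) : Dec F (souslinOp sc) := by
  classical
  intro P
  by_cases hnw : NW sc P []
  case neg =>
    unfold NW at hnw
    push_neg at hnw
    obtain ⟨c', hc1, hc2⟩ := hnw
    refine ⟨c', hc1, Or.inr ?_⟩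
    rw [← Asl_nil sc]
    exact hc2
  case pos =>
    have h0 : ∃ P0 : Cnd F, P0.le P ∧ spC P0 ⊆ sc [] ∧ NW sc P0 [] := by
      obtain ⟨Q, hQle, hQ⟩ := hsc [] P
      rcases hQ with hQ | hQ
      · exact ⟨Q, hQle, hQ, NW_mono hQle hnw⟩
      · exfalso
        obtain ⟨x, hx1, hx2⟩ := hnw Q hQle
        rw [Set.eq_empty_iff_forall_notMem] at hQ
        exact hQ x ⟨hx1, Asl_subset sc [] hx2⟩
    obtain ⟨P0, hP0le, hP0sub, hP0nw⟩ := h0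
    -- the fusion state and invariants
    set Valid : ℕ → Cnd F × Finset ℕ × ((LP V → Λ) → List ℕ) → Prop := fun n st =>
      st.1.le P0 ∧ ↑st.2.1 ⊆ st.1.K ∧ n ≤ st.2.1.card ∧
      (∀ ε, NW sc (cnd st.1 st.2.1 ε) (st.2.2 ε)) ∧
      (∀ ε, spC (cnd st.1 st.2.1 ε) ⊆ sc (st.2.2 ε)) ∧
      (∀ ε ε', (∀ s ∈ lprod F.Q.D, lev s ∈ st.2.1 → ε s = ε' s) → st.2.2 ε = st.2.2 ε')
      with hValidDef
    set Rel : ℕ → Cnd F × Finset ℕ × ((LP V → Λ) → List ℕ) →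
        Cnd F × Finset ℕ × ((LP V → Λ) → List ℕ) → Prop := fun _ st st' =>
      st'.1.le st.1 ∧ st.2.1 ⊆ st'.2.1 ∧ ∀ ε, ∃ m, st'.2.2 ε = st.2.2 ε ++ [m]
      with hRelDef
    have hV0 : Valid 0 (P0, ∅, fun _ => []) := by
      refine ⟨Cnd.le_refl P0, by simp, by simp, ?_, ?_, fun _ _ _ => rfl⟩
      · intro ε
        exact NW_mono (cnd_le_self (by simp) ε) hP0nw
      · intro ε
        exact (spC_mono (cnd_le_self (by simp) ε)).trans hP0sub
    have hstep : ∀ n st, Valid n st → ∃ st', Valid (n+1) st' ∧ Rel n st st' := by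
      rintro n ⟨P1, R, ν⟩ ⟨hle, hRK, hcard, hNW, hsub, hinv⟩
      dsimp only at hle hRK hcard hNW hsub hinv
      obtain ⟨k, hk⟩ := (P1.hinf.diff R.finite_toSet).nonempty
      have hkR : k ∉ R := fun hh => hk.2 (Finset.mem_coe.mpr hh)
      have hR'K : ↑(insert k R) ⊆ P1.K := by
        intro x hx
        simp only [Finset.coe_insert, Set.mem_insert_iff] at hx
        rcases hx with rfl | hx
        · exact hk.1
        · exact hRK hx
      have hRsub : R ⊆ insert k R := Finset.subset_insert k R
      obtain ⟨P', hP'le, hP'R, hbox⟩ := boxLemma P1 (insert k R) hR'K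
        (fun ε c => ∃ m, NW sc c (ν ε ++ [m]) ∧ spC c ⊆ sc (ν ε ++ [m]))
        (fun ε c c' hle' hψ => by
          obtain ⟨m, h1, h2⟩ := hψ
          exact ⟨m, NW_mono hle' h1, (spC_mono hle').trans h2⟩)
        (fun ε W hW => by
          have hWle : W.le (cnd P1 R ε) :=
            Cnd.le_trans hW (cnd_mono (Cnd.le_refl P1) hRsub hR'K ε)
          have hWnw : NW sc W (ν ε) := NW_mono hWle (hNW ε)
          have hm : ∃ m, ∃ Z1 : Cnd F, Z1.le W ∧ NW sc Z1 (ν ε ++ [m]) := by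
            by_contra hcon
            push_neg at hcon
            have havoid : ∀ m, ∀ W1 : Cnd F, W1.le W →
                ∃ W2, W2.le W1 ∧ spC W2 ∩ Asl sc (ν ε ++ [m]) = ∅ := by
              intro m W1 hW1
              have hc := hcon m W1 hW1
              unfold NW at hc
              push_neg at hc
              obtain ⟨c', hc1, hc2⟩ := hc
              exact ⟨c', hc1, hc2⟩
            obtain ⟨W2, hW2le, hW2⟩ := sigmaAvoid W (fun m => Asl sc (ν ε ++ [m])) havoid
            obtain ⟨x, hx1, hx2⟩ := hWnw W2 hW2le
            have hx3 := Asl_succ sc (ν ε) hx2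
            obtain ⟨m, hm⟩ := Set.mem_iUnion.mp hx3
            rw [Set.eq_empty_iff_forall_notMem] at hW2
            exact hW2 x ⟨hx1, Set.mem_iUnion.mpr ⟨m, hm⟩⟩
          obtain ⟨m, Z1, hZ1le, hZ1nw⟩ := hm
          obtain ⟨Z2, hZ2le, hZ2⟩ := hsc (ν ε ++ [m]) Z1
          rcases hZ2 with hZ2 | hZ2
          · exact ⟨Z2, Cnd.le_trans hZ2le hZ1le, m, NW_mono hZ2le hZ1nw, hZ2⟩
          · exfalso
            obtain ⟨x, hx1, hx2⟩ := hZ1nw Z2 hZ2le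
            rw [Set.eq_empty_iff_forall_notMem] at hZ2
            exact hZ2 x ⟨hx1, Asl_subset _ _ hx2⟩)
      have hmf : ∀ g : ↥(RVars F (insert k R)) → Λ,
          NW sc (cnd P' (insert k R) (extFn F (insert k R) g))
            (ν (extFn F (insert k R) g) ++ [Classical.choose (hbox g)]) ∧
          spC (cnd P' (insert k R) (extFn F (insert k R) g)) ⊆
            sc (ν (extFn F (insert k R) g) ++ [Classical.choose (hbox g)]) :=
        fun g => Classical.choose_spec (hbox g)
      refine ⟨(P', insert k R, fun ε => ν ε ++ [Classical.choose (hbox (restr F (insert k R) ε))]),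
        ⟨Cnd.le_trans hP'le hle, hP'R, ?_, ?_, ?_, ?_⟩,
        hP'le, hRsub, fun ε => ⟨_, rfl⟩⟩
      · dsimp only
        rw [Finset.card_insert_of_notMem hkR]
        omega
      · -- NW for every box
        intro ε
        dsimp only
        set g := restr F (insert k R) ε with hg
        have hagree : ∀ s ∈ lprod F.Q.D, lev s ∈ insert k R →
            extFn F (insert k R) g s = ε s := fun s hs hlev => extFn_restr _ ε s hs hlev
        have hν : ν (extFn F (insert k R) g) = ν ε :=
          hinv _ _ (fun s hs hlev => hagree s hs (hRsub hlev))
        have hle2 : (cnd P' (insert k R) ε).le (cnd P' (insert k R) (extFn F (insert k R) g)) :=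
          cnd_congr_le P' (insert k R) (fun s hs hlev => (hagree s hs hlev).symm)
        have h1 := (hmf g).1
        set m := Classical.choose (hbox g) with hm
        rw [hν] at h1
        exact NW_mono hle2 h1
      · -- inclusion for every box
        intro ε
        dsimp only
        set g := restr F (insert k R) ε with hg
        have hagree : ∀ s ∈ lprod F.Q.D, lev s ∈ insert k R →
            extFn F (insert k R) g s = ε s := fun s hs hlev => extFn_restr _ ε s hs hlev
        have hν : ν (extFn F (insert k R) g) = ν ε :=
          hinv _ _ (fun s hs hlev => hagree s hs (hRsub hlev))
        have hle2 : (cnd P' (insert k R) ε).le (cnd P' (insert k R) (extFn F (insert k R) g)) :=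
          cnd_congr_le P' (insert k R) (fun s hs hlev => (hagree s hs hlev).symm)
        have h1 := (hmf g).2
        set m := Classical.choose (hbox g) with hm
        rw [hν] at h1
        exact (spC_mono hle2).trans h1
      · -- invariance of the node assignment
        intro ε ε' hagree
        dsimp only
        have h1 : ν ε = ν ε' := hinv ε ε' (fun s hs hlev => hagree s hs (hRsub hlev))
        have h2 : restr F (insert k R) ε = restr F (insert k R) ε' := by
          funext s
          exact hagree s.1 s.2.1 s.2.2
        rw [h1, h2]
    obtain ⟨f, hf0, hfValid, hfRel⟩ := depRec Valid Rel (P0, ∅, fun _ => []) hV0 hstep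
    obtain ⟨Pinf, hPinfle, hPinfR⟩ := limitCnd (fun n => ((f n).1, (f n).2.1))
      (fun n => (hfRel n).1) (fun n => (hfRel n).2.1)
      (fun n => (hfValid n).2.1) (fun n => (hfValid n).2.2.1)
    have hPinfP0 : Pinf.le P0 := by
      have h1 := hPinfle 0
      rw [hf0] at h1
      exact h1
    refine ⟨Pinf, Cnd.le_trans hPinfP0 hP0le, Or.inl ?_⟩
    rintro x ⟨a, ha, rfl⟩
    have hstage : ∀ n, (fun t => Sum.elim id a (F.Q.Q t.1)) ∈ sc ((f n).2.2 a) := by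
      intro n
      have hself : (fun t => Sum.elim id a (F.Q.Q t.1)) ∈ spC (cnd Pinf (f n).2.1 a) :=
        selfBox _ ha rfl
      have hle2 : (cnd Pinf (f n).2.1 a).le (cnd (f n).1 (f n).2.1 a) :=
        cnd_mono (hPinfle n) (subset_refl _) (hPinfR n) a
      exact (hfValid n).2.2.2.2.1 a (spC_mono hle2 hself)
    have hstep' : ∀ n, ∃ m, (f (n+1)).2.2 a = (f n).2.2 a ++ [m] := fun n => (hfRel n).2.2 a
    have hlist : ∀ n, (f n).2.2 a = (List.range n).map (fun n => Classical.choose (hstep' n)) := by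
      intro n
      induction n with
      | zero =>
        rw [hf0]
        simp
      | succ n ih =>
        have h1 := Classical.choose_spec (hstep' n)
        refine h1.trans ?_
        refine (congrArg (fun l => l ++ [Classical.choose (hstep' n)]) ih).trans ?_
        simp [List.range_succ]
    refine Set.mem_iUnion.mpr ⟨fun n => Classical.choose (hstep' n), Set.mem_iInter.mpr (fun n => ?_)⟩
    rw [← hlist n]
    exact hstage n

end Souslin

end HJaux

/-- **Hales–Jewett for words indexed by a dense vector subset.** Let `D` be a dense
vector subset of `T`. For every finite Souslin measurable coloring of `W^∞(Λ,T,D)` (all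
maps `⊗D → Λ`, with the product topology) and every subspace `F` of `W^∞(Λ,T,D)`, there
is a further subspace `F' ≤ F` with `[F']_Λ` monochromatic. -/
theorem stmt14 {d : ℕ} (Λ : Type) [Finite Λ] (V : Fin (d + 1) → TreeT)
    (D : VecSub V) (hD : D.IsDense)
    (r : ℕ) (hr : 0 < r) (c : (lpD D → Λ) → Fin r)
    (hc : ∀ γ : Fin r, SMeas (infTopD Λ D) {B | c B = γ})
    (F : DSubspace Λ D) :
    ∃ F' : DSubspace Λ D,
      spanD F' ⊆ spanD F ∧
      ∃ γ : Fin r, ∀ B ∈ spanD F', c B = γ := by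
  classical
  rcases isEmpty_or_nonempty Λ with hE | hN
  · -- with an empty alphabet the span is empty and everything is vacuous
    refine ⟨F, subset_rfl, ⟨0, hr⟩, ?_⟩
    rintro B ⟨A, ⟨a, _⟩, _⟩
    have hroot : InLP V (fun _ => []) := ⟨fun i => (V i).root, fun _ => rfl⟩
    exact (hE.false (a ⟨fun _ => [], hroot⟩)).elim
  · -- every Souslin measurable set is decidable by conditions
    have hdec : ∀ γ : Fin r, HJaux.Dec F {B | c B = γ} := by
      intro γ
      exact hc γ {S | HJaux.Dec F S}
        (fun U hU => HJaux.Dec.isOpen hU)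
        (fun B hB => HJaux.Dec.compl hB)
        (fun B B' h h' => HJaux.Dec.union h h')
        (fun s hs => HJaux.Dec.souslin s hs)
    -- the top condition
    set Ptop : HJaux.Cnd F :=
      ⟨F.Q.D.lvlSet, fun _ => Classical.arbitrary Λ, subset_rfl, F.Q.dense.1⟩ with hPtop
    -- iterate over the colors
    have hiter : ∀ j : ℕ, j ≤ r →
        (∃ (Pm : HJaux.Cnd F) (γ : Fin r), HJaux.spC Pm ⊆ {B | c B = γ}) ∨
        (∃ Pm : HJaux.Cnd F, ∀ γ : Fin r, (γ : ℕ) < j → HJaux.spC Pm ∩ {B | c B = γ} = ∅) := by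
      intro j hj
      induction j with
      | zero => exact Or.inr ⟨Ptop, fun γ hγ => absurd hγ (Nat.not_lt_zero _)⟩
      | succ j ih =>
        rcases ih (by omega) with h | ⟨Pm, hPm⟩
        · exact Or.inl h
        · obtain ⟨Q, hQle, hQ⟩ := hdec ⟨j, by omega⟩ Pm
          rcases hQ with hQ | hQ
          · exact Or.inl ⟨Q, ⟨j, by omega⟩, hQ⟩
          · refine Or.inr ⟨Q, fun γ hγ => ?_⟩
            by_cases hγj : (γ : ℕ) = j
            · have hcast : γ = ⟨j, by omega⟩ := Fin.ext hγj
              rw [hcast]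
              exact hQ
            · have h1 := hPm γ (by omega)
              rw [Set.eq_empty_iff_forall_notMem] at h1 ⊢
              rintro x ⟨hx1, hx2⟩
              exact h1 x ⟨HJaux.spC_mono hQle hx1, hx2⟩
    rcases hiter r (le_refl r) with ⟨Pm, γ, hmono⟩ | ⟨Pm, hall⟩
    · -- monochromatic condition found: freeze it into a subspace
      refine ⟨HJaux.freezeSub F Pm,
        (HJaux.freeze_spanD_sub Pm).trans (HJaux.spC_subset_spanD Pm), γ, ?_⟩
      intro B hB
      exact hmono (HJaux.freeze_spanD_sub Pm hB)
    · -- impossible: the colors cover the nonempty span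
      exfalso
      obtain ⟨B0, hB0⟩ := HJaux.spC_nonempty Pm
      have h1 := hall (c B0) (c B0).isLt
      rw [Set.eq_empty_iff_forall_notMem] at h1
      exact h1 B0 ⟨hB0, rfl⟩
end

section
/- Let T be a vector tree of infinite height, r a positive integer, c : U(T) → {1,...,r} a Souslin measurable coloring, D a dense vector subset of T, U = (U_t)_{t∈⊗D} a D-subspace of U(T), n a non-negative integer, and t ∈ ⊗D(n). Then there exist a dense vector subset D' of D and a D'-subspace U' of U(T) such that: (i) D'↾(n+1) = D↾(n+1); (ii) U' ≤ U and U'↾n = U↾n; (iii) c(V) = c(V') for all V, V' ∈ [U'] with min V = min V' = t. -/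
set_option autoImplicit false

variable {d : ℕ}

variable {d : ℕ} {V : Fin (d + 1) → TreeT}

/-- The product topology on subsets of `⊗T` (identified with their characteristic
functions into `Prop ≅ {0,1}`), with the discrete topology on each factor. -/
def uTop {d : ℕ} (V : Fin (d + 1) → TreeT) : TopologicalSpace (Set (LP V)) :=
  @Pi.topologicalSpace (LP V) (fun _ => Prop) (fun _ => ⊥)

/-- `u` is a `D`-subspace of `U(T)`: a family `(u t)_{t ∈ ⊗D}` of pairwise disjoint
subsets of `⊗T`, each having a minimum, with `min (u t) = t`. -/
def IsUSub {d : ℕ} {V : Fin (d + 1) → TreeT} (D : VecSub V)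
    (u : LP V → Set (LP V)) : Prop :=
  (∀ t ∈ lprod D, isMinOf t (u t)) ∧
  ∀ t ∈ lprod D, ∀ t' ∈ lprod D, t ≠ t' → Disjoint (u t) (u t')

/-- The span `[U]` of a `D`-subspace: all unions of subfamilies that still have a
minimum. -/
def spanU {d : ℕ} {V : Fin (d + 1) → TreeT} (D : VecSub V)
    (u : LP V → Set (LP V)) : Set (Set (LP V)) :=
  {W | (∃ Γ ⊆ lprod D, W = ⋃ t ∈ Γ, u t) ∧ ∃ m : LP V, isMinOf m W}

set_option linter.unusedSectionVars false
set_option linter.unusedVariables false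


set_option linter.unusedSectionVars false

section BP

variable {α : Type} [TopologicalSpace α]

/-- countable unions of meagre sets (general countable index). -/
lemma isMeagre_iUnion' {κ : Sort*} [Countable κ] {s : κ → Set α}
    (hs : ∀ k, IsMeagre (s k)) : IsMeagre (⋃ k, s k) := by
  rw [IsMeagre, Set.compl_iUnion]
  exact countable_iInter_mem.mpr hs


lemma IsMeagre.union' {s t : Set α} (hs : IsMeagre s) (ht : IsMeagre t) :
    IsMeagre (s ∪ t) := by
  rw [IsMeagre, Set.compl_union]
  exact Filter.inter_mem hs ht

/-- Our Baire property predicate. -/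
def HasBP (A : Set α) : Prop :=
  ∃ O : Set α, IsOpen O ∧ IsMeagre (A \ O) ∧ IsMeagre (O \ A)

lemma IsOpen.hasBP {O : Set α} (h : IsOpen O) : HasBP O :=
  ⟨O, h, by simp [IsMeagre.empty], by simp [IsMeagre.empty]⟩

lemma IsMeagre.hasBP {A : Set α} (h : IsMeagre A) : HasBP A :=
  ⟨∅, isOpen_empty, by simpa using h, by simp [IsMeagre.empty]⟩

lemma hasBP_univ : HasBP (Set.univ : Set α) := isOpen_univ.hasBP

/-- A closed set minus its interior is meagre. -/
lemma isMeagre_closed_diff_interior {C : Set α} (hC : IsClosed C) :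
    IsMeagre (C \ interior C) := by
  have hclosed : IsClosed (C \ interior C) := hC.sdiff isOpen_interior
  have hint : interior (C \ interior C) = ∅ := by
    have h1 : interior (C \ interior C) ⊆ interior C :=
      interior_mono Set.diff_subset
    have h2 : interior (C \ interior C) ⊆ (interior C)ᶜ := by
      refine interior_subset.trans ?_
      intro y hy
      exact hy.2
    ext y; simp only [Set.mem_empty_iff_false, iff_false]
    intro hy
    exact h2 hy (h1 hy)
  rw [IsMeagre]
  apply residual_of_dense_open hclosed.isOpen_compl
  rwa [← interior_eq_empty_iff_dense_compl]

lemma HasBP.compl {A : Set α} (h : HasBP A) : HasBP Aᶜ := by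
  obtain ⟨O, hO, h1, h2⟩ := h
  refine ⟨interior Oᶜ, isOpen_interior, ?_, ?_⟩
  · have : Aᶜ \ interior Oᶜ ⊆ (O \ A) ∪ (Oᶜ \ interior Oᶜ) := by
      intro y hy
      by_cases hyO : y ∈ O
      · exact Or.inl ⟨hyO, fun hA => hy.1 hA⟩
      · exact Or.inr ⟨hyO, hy.2⟩
    exact ((h2.union' (isMeagre_closed_diff_interior hO.isClosed_compl)).mono this)
  · have : interior Oᶜ \ Aᶜ ⊆ A \ O := by
      intro y hy
      exact ⟨not_not.mp hy.2, fun hO' => (interior_subset hy.1) hO'⟩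
    exact h1.mono this

lemma HasBP.iUnion {κ : Sort*} [Countable κ] {A : κ → Set α}
    (h : ∀ k, HasBP (A k)) : HasBP (⋃ k, A k) := by
  choose O hO h1 h2 using h
  refine ⟨⋃ k, O k, isOpen_iUnion hO, ?_, ?_⟩
  · refine (isMeagre_iUnion' (s := fun k => A k \ O k) h1).mono ?_
    intro y ⟨hy1, hy2⟩
    simp only [Set.mem_iUnion] at hy1 ⊢
    obtain ⟨k, hk⟩ := hy1
    exact ⟨k, hk, fun h' => hy2 (Set.mem_iUnion.mpr ⟨k, h'⟩)⟩
  · refine (isMeagre_iUnion' (s := fun k => O k \ A k) h2).mono ?_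
    intro y ⟨hy1, hy2⟩
    simp only [Set.mem_iUnion] at hy1 ⊢
    obtain ⟨k, hk⟩ := hy1
    exact ⟨k, hk, fun h' => hy2 (Set.mem_iUnion.mpr ⟨k, h'⟩)⟩

lemma HasBP.union {A B : Set α} (hA : HasBP A) (hB : HasBP B) : HasBP (A ∪ B) := by
  have : A ∪ B = ⋃ b : Bool, (if b then A else B) := by
    ext y; simp [Set.mem_iUnion, Bool.exists_bool, or_comm]
  rw [this]
  exact HasBP.iUnion (fun b => by cases b <;> simpa)

lemma HasBP.inter {A B : Set α} (hA : HasBP A) (hB : HasBP B) : HasBP (A ∩ B) := by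
  have : A ∩ B = (Aᶜ ∪ Bᶜ)ᶜ := by simp [Set.compl_union]
  rw [this]
  exact (hA.compl.union hB.compl).compl

lemma HasBP.of_diff {A E : Set α} (hE : HasBP E) (h1 : IsMeagre (E \ A))
    (h2 : IsMeagre (A \ E)) : HasBP A := by
  obtain ⟨O, hO, m1, m2⟩ := hE
  refine ⟨O, hO, ?_, ?_⟩
  · refine (h2.union' m1).mono ?_
    intro y ⟨hy1, hy2⟩
    by_cases hyE : y ∈ E
    · exact Or.inr ⟨hyE, hy2⟩
    · exact Or.inl ⟨hy1, hyE⟩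
  · refine (m2.union' h1).mono ?_
    intro y ⟨hy1, hy2⟩
    by_cases hyE : y ∈ E
    · exact Or.inr ⟨hyE, hy2⟩
    · exact Or.inl ⟨hy1, hyE⟩

end BP
section Hull

open TopologicalSpace

variable {α : Type} [TopologicalSpace α] [SecondCountableTopology α]

/-- Every set has a Baire-property hull. -/
lemma exists_bp_hull (A : Set α) :
    ∃ E : Set α, A ⊆ E ∧ HasBP E ∧ ∀ C : Set α, HasBP C → A ⊆ C → IsMeagre (E \ C) := by
  classical
  set 𝒰 : Set (Set α) := {B ∈ countableBasis α | IsMeagre (B ∩ A)} with h𝒰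
  set W : Set α := ⋃₀ 𝒰 with hW
  have hWopen : IsOpen W :=
    isOpen_sUnion (fun B hB => (isBasis_countableBasis α).isOpen hB.1)
  have h𝒰count : 𝒰.Countable := (countable_countableBasis α).mono (fun B hB => hB.1)
  have hWA : IsMeagre (W ∩ A) := by
    haveI : Countable 𝒰 := h𝒰count.to_subtype
    have hsub : W ∩ A ⊆ ⋃ B : 𝒰, ((B : Set α) ∩ A) := by
      rintro y ⟨hyW, hyA⟩
      obtain ⟨B, hB, hyB⟩ := hyW
      exact Set.mem_iUnion.mpr ⟨⟨B, hB⟩, hyB, hyA⟩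
    exact (isMeagre_iUnion' (fun B : 𝒰 => B.2.2)).mono hsub
  refine ⟨Wᶜ ∪ A, fun y hy => Or.inr hy, ?_, ?_⟩
  · have : Wᶜ ∪ A = Wᶜ ∪ (A ∩ W) := by
      ext y
      constructor
      · rintro (hy | hy)
        · exact Or.inl hy
        · by_cases hyW : y ∈ W
          · exact Or.inr ⟨hy, hyW⟩
          · exact Or.inl hyW
      · rintro (hy | hy)
        · exact Or.inl hy
        · exact Or.inr hy.1
    rw [this]
    have hAW : IsMeagre (A ∩ W) := IsMeagre.mono (fun y (hy : y ∈ A ∩ W) => (⟨hy.2, hy.1⟩ : y ∈ W ∩ A)) hWA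
    exact (hWopen.hasBP.compl).union hAW.hasBP
  · intro C hC hAC
    obtain ⟨Q, hQ, mq1, mq2⟩ := hC.compl
    have hQW : Q ⊆ W := by
      obtain ⟨S, hS𝒰, hQS⟩ := (isBasis_countableBasis α).open_eq_sUnion hQ
      rw [hQS]
      refine Set.sUnion_subset (fun B hBS => ?_)
      have hBQ : B ⊆ Q := by rw [hQS]; exact Set.subset_sUnion_of_mem hBS
      have : IsMeagre (B ∩ A) := by
        refine mq2.mono ?_
        intro y ⟨hyB, hyA⟩
        exact ⟨hBQ hyB, not_not.mpr (hAC hyA)⟩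
      intro y hyB
      exact ⟨B, ⟨hS𝒰 hBS, this⟩, hyB⟩
    have : (Wᶜ ∪ A) \ C ⊆ Cᶜ \ Q := by
      rintro y ⟨(hy | hy), hyC⟩
      · exact ⟨hyC, fun hq => hy (hQW hq)⟩
      · exact absurd (hAC hy) hyC
    exact mq1.mono this

end Hull

section Marczewski

variable {α : Type} [TopologicalSpace α] [SecondCountableTopology α]

private def monScheme (s : List ℕ → Set α) (l : List ℕ) : Set α :=
  ⋂ m ∈ Finset.range (l.length + 1), s (l.take m)

private lemma hasBP_biInter_finset {β : Type} (F : Finset β) (f : β → Set α)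
    (hf : ∀ b, HasBP (f b)) : HasBP (⋂ b ∈ F, f b) := by
  classical
  induction F using Finset.induction_on with
  | empty => simpa using hasBP_univ
  | insert _ _ ha ih =>
      rw [Finset.set_biInter_insert]
      exact (hf _).inter ih

private lemma monScheme_hasBP {s : List ℕ → Set α} (hs : ∀ l, HasBP (s l)) (l : List ℕ) :
    HasBP (monScheme s l) :=
  hasBP_biInter_finset _ _ (fun _ => hs _)

private lemma monScheme_subset (s : List ℕ → Set α) (l : List ℕ) :
    monScheme s l ⊆ s l := by
  intro y hy
  have := Set.mem_iInter₂.mp hy l.length (Finset.mem_range.mpr (Nat.lt_succ_self _))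
  simpa [List.take_length] using this

private lemma monScheme_mono (s : List ℕ → Set α) {l l' : List ℕ} (h : l <+: l') :
    monScheme s l' ⊆ monScheme s l := by
  intro y hy
  refine Set.mem_iInter₂.mpr (fun m hm => ?_)
  have hm' : m ≤ l.length := Nat.lt_succ_iff.mp (Finset.mem_range.mp hm)
  have hl : l.take m = l'.take m := by
    obtain ⟨r, rfl⟩ := h
    rw [List.take_append_of_le_length hm']
  rw [hl]
  exact Set.mem_iInter₂.mp hy m
    (Finset.mem_range.mpr (Nat.lt_succ_of_le (hm'.trans h.length_le)))

private lemma souslinOp_monScheme (s : List ℕ → Set α) :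
    souslinOp (monScheme s) = souslinOp s := by
  unfold souslinOp
  ext y
  simp only [Set.mem_iUnion, Set.mem_iInter]
  constructor
  · rintro ⟨σ, hσ⟩
    exact ⟨σ, fun n => monScheme_subset s _ (hσ n)⟩
  · rintro ⟨σ, hσ⟩
    refine ⟨σ, fun n => Set.mem_iInter₂.mpr (fun m hm => ?_)⟩
    have hm' : m ≤ n := by
      have := Finset.mem_range.mp hm
      simpa using Nat.lt_succ_iff.mp this
    have : ((List.range n).map σ).take m = (List.range m).map σ := by
      rw [← List.map_take, List.take_range, Nat.min_eq_left hm']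
    rw [this]
    exact hσ m

private def AStar (s : List ℕ → Set α) (l : List ℕ) : Set α :=
  ⋃ σ : ℕ → ℕ, ⋂ n : ℕ, monScheme s (l ++ (List.range n).map σ)

private lemma AStar_subset (s : List ℕ → Set α) (l : List ℕ) :
    AStar s l ⊆ monScheme s l := by
  rintro y hy
  obtain ⟨σ, hσ⟩ := Set.mem_iUnion.mp hy
  have := Set.mem_iInter.mp hσ 0
  simpa using this

private lemma AStar_eq_iUnion (s : List ℕ → Set α) (l : List ℕ) :
    AStar s l = ⋃ k : ℕ, AStar s (l ++ [k]) := by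
  ext y
  simp only [AStar, Set.mem_iUnion, Set.mem_iInter]
  constructor
  · rintro ⟨σ, hσ⟩
    refine ⟨σ 0, fun i => σ (i + 1), fun n => ?_⟩
    have key : (l ++ [σ 0]) ++ (List.range n).map (fun i => σ (i + 1))
        = l ++ (List.range (n + 1)).map σ := by
      rw [List.range_succ_eq_map, List.append_assoc]
      simp [List.map_map, Function.comp]
    rw [key]
    exact hσ (n + 1)
  · rintro ⟨k, τ, hτ⟩
    refine ⟨fun i => Nat.rec k (fun m _ => τ m) i, fun n => ?_⟩
    cases n with
    | zero =>
        simpa using monScheme_mono s ⟨[k], rfl⟩ (by simpa using hτ 0)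
    | succ n =>
        have key : l ++ (List.range (n + 1)).map (fun i => Nat.rec k (fun m _ => τ m) i)
            = (l ++ [k]) ++ (List.range n).map τ := by
          rw [List.range_succ_eq_map, List.append_assoc]
          congr 1
          simp [List.map_map, Function.comp]
        rw [key]
        exact hτ n

private lemma AStar_nil (s : List ℕ → Set α) : AStar s [] = souslinOp s := by
  rw [← souslinOp_monScheme]
  unfold AStar souslinOp
  simp

lemma hasBP_souslinOp {s : List ℕ → Set α} (hs : ∀ l, HasBP (s l)) :
    HasBP (souslinOp s) := by
  classical
  choose hull hull_sub hull_bp hull_min using fun l => exists_bp_hull (AStar s l)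
  set E : List ℕ → Set α := fun l => hull l ∩ monScheme s l with hE
  have hE_bp : ∀ l, HasBP (E l) := fun l => (hull_bp l).inter (monScheme_hasBP hs l)
  have hE_sub : ∀ l, AStar s l ⊆ E l := fun l y hy =>
    ⟨hull_sub l hy, AStar_subset s l hy⟩
  set M : List ℕ → Set α := fun l => E l \ ⋃ k : ℕ, E (l ++ [k]) with hM
  have hM_meagre : ∀ l, IsMeagre (M l) := by
    intro l
    have hC : HasBP (⋃ k : ℕ, E (l ++ [k])) := HasBP.iUnion (fun k => hE_bp _)
    have hAC : AStar s l ⊆ ⋃ k : ℕ, E (l ++ [k]) := by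
      rw [AStar_eq_iUnion]
      exact Set.iUnion_mono (fun k => hE_sub _)
    exact IsMeagre.mono (fun y (hy : y ∈ M l) => (⟨hy.1.1, hy.2⟩ : y ∈ hull l \ ⋃ k : ℕ, E (l ++ [k]))) (hull_min l _ hC hAC)
  have hdiff : E [] \ souslinOp s ⊆ ⋃ l : List ℕ, M l := by
    intro y hy
    by_contra hyM
    simp only [Set.mem_iUnion, not_exists] at hyM
    apply hy.2
    have hstep : ∀ l : List ℕ, y ∈ E l → ∃ k : ℕ, y ∈ E (l ++ [k]) := by
      intro l hl
      have := hyM l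
      rw [hM] at this
      simp only [Set.mem_diff, not_and, not_not] at this
      exact Set.mem_iUnion.mp (this hl)
    -- build the branch
    let next : {l : List ℕ // y ∈ E l} → {l : List ℕ // y ∈ E l} :=
      fun p => ⟨p.1 ++ [Classical.choose (hstep p.1 p.2)],
        Classical.choose_spec (hstep p.1 p.2)⟩
    let F : ℕ → {l : List ℕ // y ∈ E l} := fun n => next^[n] ⟨[], hy.1⟩
    let σ : ℕ → ℕ := fun n => Classical.choose (hstep (F n).1 (F n).2)
    have hFsucc : ∀ n, (F (n + 1)).1 = (F n).1 ++ [σ n] := by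
      intro n
      show (next^[n + 1] ⟨[], hy.1⟩).1 = _
      rw [Function.iterate_succ_apply']
    have hF : ∀ n, (F n).1 = (List.range n).map σ := by
      intro n
      induction n with
      | zero => rfl
      | succ n ih => rw [hFsucc n, ih, List.range_succ, List.map_append]; rfl
    rw [← souslinOp_monScheme]
    refine Set.mem_iUnion.mpr ⟨σ, Set.mem_iInter.mpr (fun n => ?_)⟩
    have := (F n).2
    rw [hF n] at this
    exact this.2
  have hsub : souslinOp s ⊆ E [] := by
    have : souslinOp s = AStar s [] := (AStar_nil s).symm
    rw [this]
    exact hE_sub []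
  refine (hE_bp []).of_diff ((isMeagre_iUnion' hM_meagre).mono hdiff) ?_
  have : souslinOp s \ E [] = ∅ := Set.diff_eq_empty.mpr hsub
  rw [this]
  exact IsMeagre.empty

end Marczewski
section Cube

variable {ι : Type} [Countable ι]

/-- A finite condition on the Cantor cube `ι → Bool`. -/
def Cond (ι : Type) : Type := Finset ι × (ι → Bool)

/-- `z` extends the finite condition `q`. -/
def CExt (q : Cond ι) (z : ι → Bool) : Prop := ∀ s ∈ q.1, z s = q.2 s

/-- `q'` refines the finite condition `q`. -/
def CLe (q q' : Cond ι) : Prop := q.1 ⊆ q'.1 ∧ ∀ s ∈ q.1, q'.2 s = q.2 s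

lemma CLe.refl (q : Cond ι) : CLe q q := ⟨Finset.Subset.refl _, fun _ _ => rfl⟩

lemma CLe.trans {q q' q'' : Cond ι} (h : CLe q q') (h' : CLe q' q'') : CLe q q'' :=
  ⟨h.1.trans h'.1, fun s hs => (h'.2 s (h.1 hs)).trans (h.2 s hs)⟩

lemma CExt.mono {q q' : Cond ι} {z : ι → Bool} (h : CLe q q') (hz : CExt q' z) : CExt q z :=
  fun s hs => (hz s (h.1 hs)).trans (h.2 s hs)

lemma isOpen_cyl (q : Cond ι) : IsOpen {z : ι → Bool | CExt q z} := by
  have : {z : ι → Bool | CExt q z} = ⋂ s ∈ q.1, (fun z : ι → Bool => z s) ⁻¹' {q.2 s} := by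
    ext z
    simp [CExt]
  rw [this]
  exact (q.1.finite_toSet).isOpen_biInter
    (fun s _ => (continuous_apply s).isOpen_preimage _ (isOpen_discrete _))

lemma cyl_nonempty (q : Cond ι) : {z : ι → Bool | CExt q z}.Nonempty :=
  ⟨q.2, fun _ _ => rfl⟩

/-- There is a finite list of functions realizing all patterns on a finite set. -/
lemma exists_patterns [DecidableEq ι] (E : Finset ι) :
    ∃ ps : List (ι → Bool), ∀ f : ι → Bool, ∃ ε ∈ ps, ∀ s ∈ E, ε s = f s := by
  classical
  induction E using Finset.induction_on with
  | empty => exact ⟨[fun _ => false], fun f => ⟨_, List.mem_singleton_self _, by simp⟩⟩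
  | insert a E ha ih =>
      obtain ⟨ps, hps⟩ := ih
      refine ⟨ps.map (fun g => Function.update g a true)
        ++ ps.map (fun g => Function.update g a false), fun f => ?_⟩
      obtain ⟨ε, hε, hεE⟩ := hps f
      refine ⟨Function.update ε a (f a), ?_, ?_⟩
      · rcases Bool.eq_false_or_eq_true (f a) with h | h <;> rw [h]
        · exact List.mem_append_left _ (List.mem_map.mpr ⟨ε, hε, rfl⟩)
        · exact List.mem_append_right _ (List.mem_map.mpr ⟨ε, hε, rfl⟩)
      · intro s hs
        rcases Finset.mem_insert.mp hs with rfl | hsE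
        · rw [Function.update_self]
        · have hsa : s ≠ a := fun h => ha (h ▸ hsE)
          rw [Function.update_of_ne hsa]
          exact hεE s hsE

/-- The core density step: all patterns on `E` can be simultaneously pushed into a
dense open set by a finite condition avoiding `E`. -/
lemma step_dense [DecidableEq ι] {U : Set (ι → Bool)} (hUo : IsOpen U) (hUd : Dense U)
    (E : Finset ι) (q : Cond ι) (hq : Disjoint q.1 E) :
    ∃ q' : Cond ι, CLe q q' ∧ Disjoint q'.1 E ∧ ∀ z, CExt q' z → z ∈ U := by
  classical
  obtain ⟨ps, hps⟩ := exists_patterns E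
  suffices h : ∀ ps' : List (ι → Bool), ∀ q : Cond ι, Disjoint q.1 E →
      ∃ q' : Cond ι, CLe q q' ∧ Disjoint q'.1 E ∧
        ∀ ε ∈ ps', ∀ z, CExt q' z → (∀ s ∈ E, z s = ε s) → z ∈ U by
    obtain ⟨q', hle, hdisj, hq'⟩ := h ps q hq
    refine ⟨q', hle, hdisj, fun z hz => ?_⟩
    obtain ⟨ε, hε, hεz⟩ := hps z
    exact hq' ε hε z hz (fun s hs => (hεz s hs).symm)
  intro ps'
  induction ps' with
  | nil => exact fun q hq => ⟨q, CLe.refl q, hq, by simp⟩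
  | cons ε ps' ih =>
      intro q hq
      -- first handle pattern ε
      set r : Cond ι := (q.1 ∪ E, fun s => if s ∈ E then ε s else q.2 s) with hr
      have hz0 : ({z : ι → Bool | CExt r z} ∩ U).Nonempty :=
        hUd.inter_open_nonempty _ (isOpen_cyl r) (cyl_nonempty r)
      obtain ⟨zs, hzs_r, hzs_U⟩ := hz0
      obtain ⟨I, w, hIw, hsub⟩ := isOpen_pi_iff.mp hUo zs hzs_U
      set q₁ : Cond ι := (q.1 ∪ (I \ E), zs) with hq₁
      have hzs_q : ∀ s ∈ q.1, zs s = q.2 s := by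
        intro s hs
        have := hzs_r s (Finset.mem_union_left _ hs)
        rw [hr] at this
        simpa [Finset.disjoint_left.mp hq hs] using this
      have hle1 : CLe q q₁ := by
        refine ⟨Finset.subset_union_left, fun s hs => ?_⟩
        exact hzs_q s hs
      have hdisj1 : Disjoint q₁.1 E := by
        rw [hq₁]
        simp only [Finset.disjoint_union_left]
        exact ⟨hq, Finset.sdiff_disjoint⟩
      obtain ⟨q', hle', hdisj', hg'⟩ := ih q₁ hdisj1
      refine ⟨q', hle1.trans hle', hdisj', ?_⟩
      intro ε' hε' z hz hzE
      rcases List.mem_cons.mp hε' with rfl | hmem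
      · -- the new pattern
        apply hsub
        intro a ha
        have hza : z a = zs a := by
          by_cases haE : a ∈ E
          · have h1 : zs a = ε' a := by
              have := hzs_r a (Finset.mem_union_right _ haE)
              rw [hr] at this
              simpa [haE] using this
            rw [hzE a haE, h1]
          · have haq : a ∈ q₁.1 := Finset.mem_union_right _ (Finset.mem_sdiff.mpr ⟨ha, haE⟩)
            have := (hz.mono (h := hle')) -- CExt q₁ z
            exact (CExt.mono hle' hz) a haq
        rw [hza]
        exact (hIw a ha).2
      · exact hg' ε' hmem z hz hzE

end Cube
section Fusion

variable {ι : Type} [Countable ι]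

/-- The fusion lemma: given countably many dense open subsets of the Cantor cube
`ι → Bool`, a sequence of finite "levels", and a starting condition, one can choose an
increasing sequence of levels and a fixed side condition `x` such that every point
agreeing with `x` off the chosen levels lies in all the dense open sets and extends the
starting condition. -/
lemma fusion [DecidableEq ι] (U : ℕ → Set (ι → Bool)) (hUo : ∀ k, IsOpen (U k))
    (hUd : ∀ k, Dense (U k)) (Lev : ℕ → Finset ι)
    (hesc : ∀ (G : Finset ι) (b : ℕ), ∃ j, b < j ∧ Disjoint (Lev j) G)
    (q₀ : Cond ι) (n₀ : ℕ) :
    ∃ (ℓ : ℕ → ℕ) (x : ι → Bool), StrictMono ℓ ∧ (∀ m, n₀ < ℓ m) ∧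
      ∀ z : ι → Bool, (∀ s : ι, (∀ m, s ∉ Lev (ℓ m)) → z s = x s) →
        CExt q₀ z ∧ ∀ k, z ∈ U k := by
  classical
  -- states: (last level index, accumulated forbidden coordinates, current condition)
  have exStep : ∀ (k : ℕ) (st : ℕ × Finset ι × Cond ι),
      Disjoint st.2.2.1 st.2.1 →
      ∃ st' : ℕ × Finset ι × Cond ι,
        Disjoint st'.2.2.1 st'.2.1 ∧ CLe st.2.2 st'.2.2 ∧ st.1 < st'.1 ∧
        st'.2.1 = st.2.1 ∪ Lev st'.1 ∧ Disjoint (Lev st'.1) st'.2.2.1 ∧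
        ∀ z, CExt st'.2.2 z → z ∈ U k := by
    intro k st hst
    obtain ⟨q', hle, hdisj, hgar⟩ :=
      step_dense (hUo k) (hUd k) st.2.1 st.2.2 hst
    obtain ⟨j, hj, hjd⟩ := hesc q'.1 st.1
    refine ⟨(j, st.2.1 ∪ Lev j, q'), ?_, hle, hj, rfl, hjd, hgar⟩
    simp only [Finset.disjoint_union_right]
    exact ⟨hdisj, hjd.symm⟩
  -- build the sequence of states
  let T := {st : ℕ × Finset ι × Cond ι // Disjoint st.2.2.1 st.2.1}
  have hq0 : Disjoint (q₀.1) (∅ : Finset ι) := Finset.disjoint_empty_right _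
  let step : ℕ → T → T := fun k p =>
    ⟨Classical.choose (exStep k p.1 p.2), (Classical.choose_spec (exStep k p.1 p.2)).1⟩
  let F : ℕ → T := fun k => Nat.rec (⟨(n₀, ∅, q₀), hq0⟩ : T) step k
  have hF0 : (F 0).1 = (n₀, ∅, q₀) := rfl
  have hFsucc : ∀ k, F (k + 1) = step k (F k) := fun k => rfl
  set b : ℕ → ℕ := fun k => (F k).1.1 with hb
  set Es : ℕ → Finset ι := fun k => (F k).1.2.1 with hEs
  set Q : ℕ → Cond ι := fun k => (F k).1.2.2 with hQ
  have hspec : ∀ k, CLe (Q k) (Q (k + 1)) ∧ b k < b (k + 1) ∧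
      Es (k + 1) = Es k ∪ Lev (b (k + 1)) ∧ Disjoint (Lev (b (k + 1))) (Q (k + 1)).1 ∧
      ∀ z, CExt (Q (k + 1)) z → z ∈ U k := by
    intro k
    have h := Classical.choose_spec (exStep k (F k).1 (F k).2)
    exact ⟨h.2.1, h.2.2.1, h.2.2.2.1, h.2.2.2.2.1, h.2.2.2.2.2⟩
  have hinv : ∀ k, Disjoint (Q k).1 (Es k) := fun k => (F k).2
  have hchain : ∀ {i j : ℕ}, i ≤ j → CLe (Q i) (Q j) := by
    intro i j hij
    induction j, hij using Nat.le_induction with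
    | base => exact CLe.refl _
    | succ j hij ih => exact ih.trans (hspec j).1
  have hEmono : ∀ {i j : ℕ}, i ≤ j → Es i ⊆ Es j := by
    intro i j hij
    induction j, hij using Nat.le_induction with
    | base => exact Finset.Subset.refl _
    | succ j hij ih =>
        rw [(hspec j).2.2.1]
        exact ih.trans Finset.subset_union_left
  have hbmono : StrictMono b := strictMono_nat_of_lt_succ (fun k => (hspec k).2.1)
  refine ⟨fun m => b (m + 1),
    fun s => if h : ∃ k, s ∈ (Q k).1 then (Q (Nat.find h)).2 s else false,
    fun i j hij => hbmono (Nat.succ_lt_succ hij), ?_, ?_⟩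
  · intro m
    have : b 0 < b (m + 1) := hbmono (Nat.succ_pos m)
    rwa [show b 0 = n₀ from rfl] at this
  · set x : ι → Bool :=
      fun s => if h : ∃ k, s ∈ (Q k).1 then (Q (Nat.find h)).2 s else false with hx
    have hxval : ∀ k s, s ∈ (Q k).1 → x s = (Q k).2 s := by
      intro k s hs
      have h : ∃ k, s ∈ (Q k).1 := ⟨k, hs⟩
      rw [hx]
      simp only [dif_pos h]
      have h0 := Nat.find_spec h
      rcases Nat.le_total (Nat.find h) k with hle | hle
      · exact ((hchain hle).2 s h0).symm
      · exact (hchain hle).2 s hs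
    intro z hz
    have hnotin : ∀ k s, s ∈ (Q k).1 → ∀ m, s ∉ Lev (b (m + 1)) := by
      intro k s hs m hmem
      rcases Nat.le_total (m + 1) k with h | h
      · have h1 : Lev (b (m + 1)) ⊆ Es (m + 1) := by
          rw [(hspec m).2.2.1]
          exact Finset.subset_union_right
        exact Finset.disjoint_left.mp (hinv k) hs (hEmono h (h1 hmem))
      · have h2 : s ∈ (Q (m + 1)).1 := (hchain h).1 hs
        exact Finset.disjoint_left.mp (hspec m).2.2.2.1 hmem h2
    have hQext : ∀ k, CExt (Q k) z := by
      intro k s hs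
      rw [hz s (hnotin k s hs)]
      exact hxval k s hs
    constructor
    · have : CExt (Q 0) z := hQext 0
      exact this
    · intro k
      exact (hspec k).2.2.2.2 z (hQext (k + 1))

end Fusion
/-! ### Tree and level-product auxiliary lemmas -/

section TreeFacts

lemma TreeT.level_finite (T : TreeT) : ∀ L : ℕ, {u : List ℕ | T.mem u ∧ u.length = L}.Finite := by
  intro L
  induction L with
  | zero =>
      refine Set.Finite.subset (Set.finite_singleton ([] : List ℕ)) ?_
      intro u hu
      simp [List.length_eq_zero_iff.mp hu.2]
  | succ L ih =>
      have hsub : {u : List ℕ | T.mem u ∧ u.length = L + 1} ⊆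
          ⋃ s ∈ {u : List ℕ | T.mem u ∧ u.length = L},
            (fun n : ℕ => s ++ [n]) '' {n : ℕ | T.mem (s ++ [n])} := by
        intro u ⟨hmem, hlen⟩
        have hne : u ≠ [] := by
          intro h
          rw [h] at hlen
          simp at hlen
        have hu : u.dropLast ++ [u.getLast hne] = u := List.dropLast_append_getLast hne
        have hmem' : T.mem u.dropLast := T.pref _ _ (by rwa [hu])
        have hlen' : u.dropLast.length = L := by
          rw [List.length_dropLast, hlen]
          rfl
        refine Set.mem_biUnion (show u.dropLast ∈ _ from ⟨hmem', hlen'⟩) ?_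
        exact ⟨u.getLast hne, show T.mem _ by rwa [hu], hu⟩
      refine Set.Finite.subset ?_ hsub
      exact Set.Finite.biUnion ih (fun s hs => (T.finBranch s hs.1).image _)

lemma TreeT.exists_extension (T : TreeT) (u : List ℕ) (h : T.mem u) :
    ∀ m : ℕ, u.length ≤ m → ∃ w : List ℕ, T.mem w ∧ w.length = m ∧ u <+: w := by
  intro m hm
  induction m, hm using Nat.le_induction with
  | base => exact ⟨u, h, rfl, List.prefix_refl u⟩
  | succ m hm ih =>
      obtain ⟨w, hw, hwl, hwp⟩ := ih
      obtain ⟨k, hk⟩ := T.noMax w hw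
      exact ⟨w ++ [k], hk, by simp [hwl], hwp.trans (List.prefix_append w [k])⟩

variable {d : ℕ} {V : Fin (d + 1) → TreeT}

instance : Countable (LP V) := by
  unfold LP
  infer_instance

lemma lev_coord {x : LP V} (i : Fin (d + 1)) : (x.1 i).length = lev x := x.2.2 i

lemma lp_level_finite (L : ℕ) : {x : LP V | lev x = L}.Finite := by
  have hfin : (Set.univ.pi (fun i : Fin (d + 1) =>
      {u : List ℕ | (V i).mem u ∧ u.length = L})).Finite :=
    Set.Finite.pi (fun i => (V i).level_finite L)
  have hsub : Subtype.val '' {x : LP V | lev x = L} ⊆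
      Set.univ.pi (fun i => {u : List ℕ | (V i).mem u ∧ u.length = L}) := by
    rintro f ⟨x, hx, rfl⟩
    intro i _
    exact ⟨x.2.1 i, (lev_coord (V := V) (x := x) i).trans hx⟩
  exact Set.Finite.of_finite_image (hfin.subset hsub)
    (Set.injOn_of_injective Subtype.val_injective)

lemma lpLE_trans {a b c : LP V} (h : lpLE a b) (h' : lpLE b c) : lpLE a c :=
  fun i => (h i).trans (h' i)

lemma lpLE_antisymm {a b : LP V} (h : lpLE a b) (h' : lpLE b a) : a = b := by
  apply Subtype.ext
  funext i
  exact (h i).eq_of_length_le (h' i).length_le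

lemma lpLE_refl (a : LP V) : lpLE a a := fun i => List.prefix_refl _

lemma lpLE_lev_le {a b : LP V} (h : lpLE a b) : lev a ≤ lev b := (h 0).length_le

lemma lpLE_eq_of_lev {a b : LP V} (h : lpLE a b) (hl : lev a = lev b) : a = b := by
  apply Subtype.ext
  funext i
  exact (h i).eq_of_length_le (by rw [lev_coord i, lev_coord i, hl])

end TreeFacts

/-! ### `Nat.nth` of an explicitly enumerated set -/

lemma nth_eq_of_enum {p : ℕ → Prop} {f : ℕ → ℕ} (hf : StrictMono f)
    (hmem : ∀ k, p (f k)) (hsurj : ∀ m, p m → ∃ k, f k = m) (k : ℕ) :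
    Nat.nth p k = f k := by
  classical
  have hcount : Nat.count p (f k) = k := by
    rw [Nat.count_eq_card_filter_range]
    have : (Finset.range (f k)).filter p = (Finset.range k).image f := by
      ext i
      simp only [Finset.mem_filter, Finset.mem_range, Finset.mem_image]
      constructor
      · rintro ⟨hi, hpi⟩
        obtain ⟨j, rfl⟩ := hsurj i hpi
        exact ⟨j, hf.lt_iff_lt.mp hi, rfl⟩
      · rintro ⟨j, hj, rfl⟩
        exact ⟨hf.lt_iff_lt.mpr hj, hmem j⟩
    rw [this, Finset.card_image_of_injective _ hf.injective, Finset.card_range]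
  conv_lhs => rw [← hcount]
  exact Nat.nth_count (hmem k)
/-! ### The map from the Cantor cube into `U(T)` and Souslin-measurable pullbacks -/

section Phi

variable {d : ℕ} {V : Fin (d + 1) → TreeT}

/-- Index type: proper extensions of `t` in `⊗D`. -/
def ConeIdx (D : VecSub V) (t : LP V) : Type :=
  {s : LP V // s ∈ lprod D ∧ lpLE t s ∧ s ≠ t}

instance (D : VecSub V) (t : LP V) : Countable (ConeIdx D t) := by
  unfold ConeIdx
  infer_instance

/-- The map sending a point of the cube to the corresponding union of pieces. -/
def phi (u : LP V → Set (LP V)) (D : VecSub V) (t : LP V)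
    (z : ConeIdx D t → Bool) : Set (LP V) :=
  {y | y ∈ u t ∨ ∃ a : ConeIdx D t, z a = true ∧ y ∈ u a.1}

lemma phi_continuous (u : LP V → Set (LP V)) (D : VecSub V) (t : LP V)
    (htD : t ∈ lprod D)
    (hdisj : ∀ s ∈ lprod D, ∀ s' ∈ lprod D, s ≠ s' → Disjoint (u s) (u s')) :
    @Continuous (ConeIdx D t → Bool) (Set (LP V)) _ (uTop V) (phi u D t) := by
  letI : TopologicalSpace Prop := ⊥
  have huT : uTop V = (Pi.topologicalSpace : TopologicalSpace (LP V → Prop)) := rfl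
  rw [huT]
  apply continuous_pi
  intro y
  by_cases hyt : y ∈ u t
  · have : (fun z : ConeIdx D t → Bool => (phi u D t z) y) = fun _ => True := by
      funext z
      exact eq_true (Or.inl hyt)
    rw [this]
    exact continuous_const
  · by_cases hya : ∃ a : ConeIdx D t, y ∈ u a.1
    · obtain ⟨a, ha⟩ := hya
      have huniq : ∀ a' : ConeIdx D t, y ∈ u a'.1 → a' = a := by
        intro a' ha'
        by_contra hne
        have hvalne : a'.1 ≠ a.1 := fun h => hne (Subtype.ext h)
        exact Set.disjoint_left.mp (hdisj a'.1 a'.2.1 a.1 a.2.1 hvalne) ha' ha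
      have : (fun z : ConeIdx D t → Bool => (phi u D t z) y)
          = (fun b : Bool => (b = true : Prop)) ∘ (fun z => z a) := by
        funext z
        show (phi u D t z) y = (z a = true)
        apply propext
        constructor
        · rintro (h | ⟨a', hz, hy'⟩)
          · exact absurd h hyt
          · rw [← huniq a' hy']; exact hz
        · intro h
          exact Or.inr ⟨a, h, ha⟩
      rw [this]
      exact Continuous.comp continuous_of_discreteTopology (continuous_apply a)
    · have : (fun z : ConeIdx D t → Bool => (phi u D t z) y) = fun _ => False := by
        funext z
        apply eq_false
        rintro (h | ⟨a', _, hy'⟩)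
        · exact hyt h
        · exact hya ⟨a', hy'⟩
      rw [this]
      exact continuous_const

/-- Souslin measurable sets pull back to Baire-property sets under continuous maps from
a second countable space. -/
lemma smeas_pullback {α : Type} [TopologicalSpace α] [SecondCountableTopology α]
    {β : Type} (τ : TopologicalSpace β) (f : α → β)
    (hf : @Continuous α β _ τ f) (A : Set β) (hA : SMeas τ A) :
    HasBP (f ⁻¹' A) := by
  refine hA {B | HasBP (f ⁻¹' B)} ?_ ?_ ?_ ?_
  · intro O hO
    exact (hf.isOpen_preimage O hO).hasBP
  · intro B hB
    rw [Set.mem_setOf_eq, Set.preimage_compl]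
    exact hB.compl
  · intro B B' hB hB'
    rw [Set.mem_setOf_eq, Set.preimage_union]
    exact hB.union hB'
  · intro s hs
    have : f ⁻¹' souslinOp s = souslinOp (fun l => f ⁻¹' (s l)) := by
      unfold souslinOp
      rw [Set.preimage_iUnion]
      simp only [Set.preimage_iInter]
    rw [Set.mem_setOf_eq, this]
    exact hasBP_souslinOp hs

end Phi
section RestrictVS

variable {d : ℕ} {V : Fin (d + 1) → TreeT}

/-- Restriction of a vector subset to a set of levels. -/
def VecSub.restrict (D : VecSub V) (K : Set ℕ) : VecSub V where
  sets := fun i => {w | w ∈ D.sets i ∧ w.length ∈ K}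
  mem := fun i w hw => D.mem i w hw.1
  lvl := by
    have key : ∀ i j : Fin (d + 1),
        {m : ℕ | ∃ w ∈ {w | w ∈ D.sets i ∧ w.length ∈ K}, w.length = m}
        ⊆ {m : ℕ | ∃ w ∈ {w | w ∈ D.sets j ∧ w.length ∈ K}, w.length = m} := by
      intro i j m hm
      obtain ⟨w, ⟨hw, hk⟩, rfl⟩ := hm
      have hmem : w.length ∈ {m : ℕ | ∃ u ∈ D.sets j, u.length = m} := by
        rw [← D.lvl i j]
        exact ⟨w, hw, rfl⟩
      obtain ⟨w', hw', hlen⟩ := hmem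
      exact ⟨w', ⟨hw', by rw [hlen]; exact hk⟩, hlen⟩
    exact fun i j => Set.Subset.antisymm (key i j) (key j i)

lemma VecSub.restrict_sets (D : VecSub V) (K : Set ℕ) (i : Fin (d + 1)) :
    (D.restrict K).sets i = {w | w ∈ D.sets i ∧ w.length ∈ K} := rfl

lemma VecSub.restrict_lvlSet (D : VecSub V) (K : Set ℕ) (hK : K ⊆ D.lvlSet) :
    (D.restrict K).lvlSet = K := by
  ext m
  constructor
  · rintro ⟨w, ⟨hw, hk⟩, rfl⟩
    exact hk
  · intro hm
    obtain ⟨w, hw, hlen⟩ := hK hm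
    exact ⟨w, ⟨hw, by rwa [hlen]⟩, hlen⟩

lemma lprod_restrict_subset (D : VecSub V) (K : Set ℕ) :
    lprod (D.restrict K) ⊆ lprod D := fun s hs i => (hs i).1

end RestrictVS
/-- **Canonicalizing the color at one minimum.** Given a Souslin measurable coloring `c`
of `U(T)`, a dense vector subset `D` of `T`, a `D`-subspace `U = (u t)`, a level `n`, and
`t ∈ ⊗D(n)`, there are a dense vector subset `D'` of `D` and a `D'`-subspace `U' = (u' t)`
such that (i) `D'↾(n+1) = D↾(n+1)`, (ii) `U' ≤ U` and `U'↾n = U↾n`, and (iii) any two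
members of the span of `U'` with minimum `t` receive the same color. -/
theorem stmt15 {d : ℕ} (V : Fin (d + 1) → TreeT)
    (r : ℕ) (hr : 0 < r) (c : Set (LP V) → Fin r)
    (hc : ∀ γ : Fin r, SMeas (uTop V) {W | c W = γ})
    (D : VecSub V) (hD : D.IsDense)
    (u : LP V → Set (LP V)) (hu : IsUSub D u)
    (n : ℕ) (t : LP V) (ht : t ∈ lprodAt D n) :
    ∃ (D' : VecSub V) (u' : LP V → Set (LP V)),
      (∀ i, D'.sets i ⊆ D.sets i) ∧ D'.IsDense ∧ IsUSub D' u' ∧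
      (∀ i, D'.restr (n + 1) i = D.restr (n + 1) i) ∧
      spanU D' u' ⊆ spanU D u ∧
      (∀ s ∈ lprodUpto D n, u' s = u s) ∧
      ∀ W ∈ spanU D' u', ∀ W' ∈ spanU D' u',
        isMinOf t W → isMinOf t W' → c W = c W' := by
  classical
  obtain ⟨htD, hlevt⟩ := ht
  obtain ⟨hDinf, hDdense⟩ := hD
  have hinfp : {m : ℕ | m ∈ D.lvlSet}.Infinite := by
    rw [Set.setOf_mem_eq]; exact hDinf
  have hLmono : StrictMono D.L := fun i j hij => (Nat.nth_lt_nth hinfp).mpr hij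
  have hLmem : ∀ k, D.L k ∈ D.lvlSet := fun k => Nat.nth_mem_of_infinite hinfp k
  set Φ : (ConeIdx D t → Bool) → Set (LP V) := phi u D t with hΦ
  have hΦc : @Continuous (ConeIdx D t → Bool) (Set (LP V)) _ (uTop V) Φ :=
    phi_continuous u D t htD hu.2
  have hBP : ∀ γ : Fin r, HasBP (Φ ⁻¹' {W | c W = γ}) :=
    fun γ => smeas_pullback (uTop V) Φ hΦc _ (hc γ)
  -- choose a colour whose preimage is non-meagre
  have hexγ : ∃ γ : Fin r, ¬ IsMeagre (Φ ⁻¹' {W | c W = γ}) := by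
    by_contra hall
    push_neg at hall
    have huniv : (Set.univ : Set (ConeIdx D t → Bool)) = ⋃ γ : Fin r, Φ ⁻¹' {W | c W = γ} := by
      ext z
      simp only [Set.mem_univ, true_iff, Set.mem_iUnion, Set.mem_preimage, Set.mem_setOf_eq]
      exact ⟨c (Φ z), rfl⟩
    have hmeag : IsMeagre (Set.univ : Set (ConeIdx D t → Bool)) := by
      rw [huniv]
      exact isMeagre_iUnion' hall
    rw [IsMeagre, Set.compl_univ] at hmeag
    have hdense : Dense (∅ : Set (ConeIdx D t → Bool)) := dense_of_mem_residual hmeag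
    exact Set.not_nonempty_empty hdense.nonempty
  obtain ⟨γ, hγ⟩ := hexγ
  set A : Set (ConeIdx D t → Bool) := Φ ⁻¹' {W | c W = γ} with hA
  obtain ⟨O, hOopen, hm1, hm2⟩ := hBP γ
  have hOne : O.Nonempty := by
    by_contra h
    rw [Set.not_nonempty_iff_eq_empty] at h
    apply hγ
    have : A \ O = A := by rw [h, Set.diff_empty]
    rwa [this] at hm1
  obtain ⟨z₀, hz₀⟩ := hOne
  obtain ⟨I0, w0, hIw0, hsub0⟩ := isOpen_pi_iff.mp hOopen z₀ hz₀
  set p : Cond (ConeIdx D t) := (I0, z₀) with hp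
  have hpO : ∀ z, CExt p z → z ∈ O := by
    intro z hz
    apply hsub0
    intro i hi
    rw [show z i = z₀ i from hz i hi]
    exact (hIw0 i hi).2
  -- countably many dense open sets whose intersection avoids O \ A
  have hUex : ∃ Un : ℕ → Set (ConeIdx D t → Bool), (∀ k, IsOpen (Un k)) ∧
      (∀ k, Dense (Un k)) ∧ ∀ z, (∀ k, z ∈ Un k) → z ∉ O \ A := by
    have hres := mem_residual_iff.mp hm2
    obtain ⟨S, hSo, hSd, hScnt, hSsub⟩ := hres
    rcases S.eq_empty_or_nonempty with rfl | hSne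
    · refine ⟨fun _ => Set.univ, fun _ => isOpen_univ, fun _ => dense_univ, fun z _ => ?_⟩
      have : z ∈ ⋂₀ (∅ : Set (Set (ConeIdx D t → Bool))) := by simp
      exact hSsub this
    · obtain ⟨g, hg⟩ := Set.Countable.exists_eq_range hScnt hSne
      refine ⟨g, fun k => hSo _ (by rw [hg]; exact Set.mem_range_self k),
        fun k => hSd _ (by rw [hg]; exact Set.mem_range_self k), fun z hz => ?_⟩
      apply hSsub
      intro B hB
      rw [hg] at hB
      obtain ⟨k, rfl⟩ := hB
      exact hz k
  obtain ⟨Un, hUno, hUnd, hUnsub⟩ := hUex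
  have hkey : ∀ z, CExt p z → (∀ k, z ∈ Un k) → c (Φ z) = γ := by
    intro z hzp hzU
    have hzO := hpO z hzp
    have hznot := hUnsub z hzU
    by_contra hne
    exact hznot ⟨hzO, fun hzA => hne hzA⟩
  -- the levels of the cone
  have hLevFin : ∀ j : ℕ, {a : ConeIdx D t | lev a.1 = D.L j}.Finite := by
    intro j
    have : {a : ConeIdx D t | lev a.1 = D.L j}
        = Subtype.val ⁻¹' {x : LP V | lev x = D.L j} := rfl
    rw [this]
    exact Set.Finite.preimage (Set.injOn_of_injective Subtype.val_injective)
      (lp_level_finite (D.L j))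
  set Lev : ℕ → Finset (ConeIdx D t) := fun j => (hLevFin j).toFinset with hLev
  have hLev_mem : ∀ j a, a ∈ Lev j ↔ lev a.1 = D.L j := by
    intro j a
    simp only [hLev]
    exact Set.Finite.mem_toFinset _
  have hesc : ∀ (G : Finset (ConeIdx D t)) (b : ℕ), ∃ j, b < j ∧ Disjoint (Lev j) G := by
    intro G b
    set m := G.sup (fun a => lev a.1) with hm
    refine ⟨max b m + 1, by omega, ?_⟩
    rw [Finset.disjoint_left]
    intro a ha haG
    have h1 : lev a.1 = D.L (max b m + 1) := (hLev_mem _ a).mp ha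
    have h2 : lev a.1 ≤ m := Finset.le_sup (f := fun a => lev a.1) haG
    have h3 : max b m + 1 ≤ D.L (max b m + 1) := hLmono.le_apply
    omega
  obtain ⟨ℓ, x, hℓmono, hℓgt, hmain⟩ := fusion Un hUno hUnd Lev hesc p n
  -- the kept levels
  set Kept : Set ℕ := {m | (∃ k, k ≤ n ∧ m = D.L k) ∨ ∃ j, m = D.L (ℓ j)} with hKept
  set fEnum : ℕ → ℕ := fun k => if k ≤ n then D.L k else D.L (ℓ (k - (n + 1))) with hfEnum
  have hℓge : ∀ j, n + 1 + j ≤ ℓ j := by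
    intro j
    induction j with
    | zero => have := hℓgt 0; omega
    | succ j ih => have := hℓmono (show j < j + 1 by omega); omega
  have hfmono : StrictMono fEnum := by
    apply strictMono_nat_of_lt_succ
    intro k
    simp only [hfEnum]
    by_cases h1 : k + 1 ≤ n
    · rw [if_pos (by omega : k ≤ n), if_pos h1]
      exact hLmono (by omega)
    · by_cases h2 : k ≤ n
      · rw [if_pos h2, if_neg h1]
        refine hLmono ?_
        have := hℓge (k + 1 - (n + 1))
        omega
      · rw [if_neg h2, if_neg h1]
        refine hLmono (hℓmono ?_)
        omega
  have hfmem : ∀ k, fEnum k ∈ Kept := by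
    intro k
    simp only [hfEnum, hKept, Set.mem_setOf_eq]
    by_cases h : k ≤ n
    · rw [if_pos h]; exact Or.inl ⟨k, h, rfl⟩
    · rw [if_neg h]; exact Or.inr ⟨k - (n + 1), rfl⟩
  have hfsurj : ∀ m, m ∈ Kept → ∃ k, fEnum k = m := by
    rintro m (⟨k, hk, rfl⟩ | ⟨j, rfl⟩)
    · exact ⟨k, by simp only [hfEnum]; rw [if_pos hk]⟩
    · refine ⟨n + 1 + j, ?_⟩
      simp only [hfEnum]
      have h : ¬ (n + 1 + j ≤ n) := by omega
      rw [if_neg h]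
      have h2 : n + 1 + j - (n + 1) = j := by omega
      rw [h2]
  have hKsub : Kept ⊆ D.lvlSet := by
    rintro m (⟨k, _, rfl⟩ | ⟨j, rfl⟩) <;> exact hLmem _
  set D2 : VecSub V := D.restrict Kept with hD2
  have hlvlSet2 : D2.lvlSet = Kept := D.restrict_lvlSet Kept hKsub
  have hKinf : Kept.Infinite := by
    apply Set.infinite_of_injective_forall_mem (f := fun j : ℕ => D.L (ℓ j))
    · intro i j hij
      exact hℓmono.injective (hLmono.injective hij)
    · intro j
      exact Or.inr ⟨j, rfl⟩
  have hL2 : ∀ k, D2.L k = fEnum k := by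
    intro k
    have hpred : (fun m => m ∈ D2.lvlSet) = fun m => m ∈ Kept := by
      funext m
      rw [hlvlSet2]
    show Nat.nth (fun m => m ∈ D2.lvlSet) k = fEnum k
    rw [hpred]
    exact nth_eq_of_enum hfmono hfmem hfsurj k
  have hsub2 : ∀ i, D2.sets i ⊆ D.sets i := fun i w hw => hw.1
  have hD2dense : D2.IsDense := by
    constructor
    · rw [hlvlSet2]; exact hKinf
    · intro k i w hw hwl
      have hfk : ∃ g, k ≤ g ∧ fEnum k = D.L g := by
        by_cases h : k ≤ n
        · exact ⟨k, le_refl k, by simp only [hfEnum]; rw [if_pos h]⟩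
        · refine ⟨ℓ (k - (n + 1)), ?_, by simp only [hfEnum]; rw [if_neg h]⟩
          have := hℓge (k - (n + 1))
          omega
      obtain ⟨g, hkg, hfg⟩ := hfk
      obtain ⟨w', hw'mem, hw'len, hw'pre⟩ := (V i).exists_extension w hw g (by omega)
      obtain ⟨w2, hw2, hw2len, hw2pre⟩ := hDdense g i w' hw'mem hw'len
      refine ⟨w2, ⟨hw2, ?_⟩, ?_, hw'pre.trans hw2pre⟩
      · rw [hw2len, ← hfg]
        exact hfmem k
      · rw [hL2 k, hw2len, hfg]
  have hrestr : ∀ i, D2.restr (n + 1) i = D.restr (n + 1) i := by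
    intro i
    ext w
    constructor
    · rintro ⟨⟨hw, hk⟩, k, hkn, hlen⟩
      refine ⟨hw, k, hkn, ?_⟩
      rw [hlen, hL2 k]; simp only [hfEnum]
      rw [if_pos (by omega : k ≤ n)]
    · rintro ⟨hw, k, hkn, hlen⟩
      have hkn' : k ≤ n := by omega
      refine ⟨⟨hw, ?_⟩, k, hkn, ?_⟩
      · rw [hlen]
        exact Or.inl ⟨k, hkn', rfl⟩
      · rw [hlen, hL2 k]; simp only [hfEnum]
        rw [if_pos hkn']
  -- cone membership facts
  set Fs : Set (ConeIdx D t) := {a | ∃ m, a ∈ Lev (ℓ m)} with hFs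
  have hlev_t_lt : ∀ s : LP V, lpLE t s → s ≠ t → lev t < lev s := by
    intro s hle hne
    rcases lt_or_eq_of_le (lpLE_lev_le hle) with h | h
    · exact h
    · exact absurd (lpLE_eq_of_lev hle h) (fun hh => hne hh.symm)
  have hconeF : ∀ a : ConeIdx D t, a.1 ∈ lprod D2 → a ∈ Fs := by
    intro a ha
    have hk : lev a.1 ∈ Kept := (ha 0).2
    have hgt : D.L n < lev a.1 := by
      rw [← hlevt]
      exact hlev_t_lt a.1 a.2.2.1 a.2.2.2
    rcases hk with ⟨k, hkn, hEq⟩ | ⟨j, hEq⟩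
    · exfalso
      have : D.L k ≤ D.L n := hLmono.monotone hkn
      omega
    · exact ⟨j, (hLev_mem (ℓ j) a).mpr hEq⟩
  have htD2 : t ∈ lprod D2 := by
    intro i
    refine ⟨htD i, ?_⟩
    rw [lev_coord i, hlevt]
    exact Or.inl ⟨n, le_refl n, rfl⟩
  -- the new subspace
  set Aset : Set (ConeIdx D t) := {a | a ∉ Fs ∧ x a = true} with hAset
  set u2 : LP V → Set (LP V) :=
    fun s => if s = t then u t ∪ ⋃ a ∈ Aset, u a.1 else u s with hu2
  have hu2ne : ∀ s : LP V, s ≠ t → u2 s = u s := by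
    intro s hs
    simp only [hu2]
    exact if_neg hs
  have hu2t : u2 t = u t ∪ ⋃ a ∈ Aset, u a.1 := by
    simp [hu2]
  have humin : ∀ s ∈ lprod D, isMinOf s (u s) := hu.1
  have hu2min_t : isMinOf t (u2 t) := by
    rw [hu2t]
    constructor
    · exact Or.inl (humin t htD).1
    · rintro s (hs | hs)
      · exact (humin t htD).2 s hs
      · obtain ⟨a, _, hsa⟩ := Set.mem_iUnion₂.mp hs
        exact lpLE_trans a.2.2.1 ((humin a.1 a.2.1).2 s hsa)
  have hlp2 : lprod D2 ⊆ lprod D := lprod_restrict_subset D Kept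
  have hdisj_t : ∀ s' ∈ lprod D2, s' ≠ t → Disjoint (u2 t) (u s') := by
    intro s' hs' hne
    rw [hu2t]; rw [Set.disjoint_left]
    rintro y (hy | hy) hy'
    · exact Set.disjoint_left.mp (hu.2 t htD s' (hlp2 hs') (Ne.symm hne)) hy hy'
    · obtain ⟨a, haA, hya⟩ := Set.mem_iUnion₂.mp hy
      have hane : a.1 ≠ s' := by
        rintro rfl
        exact haA.1 (hconeF a hs')
      exact Set.disjoint_left.mp (hu.2 a.1 a.2.1 s' (hlp2 hs') hane) hya hy'
  have hu2sub : IsUSub D2 u2 := by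
    constructor
    · intro s hs
      by_cases hst : s = t
      · subst hst
        exact hu2min_t
      · rw [hu2ne s hst]
        exact humin s (hlp2 hs)
    · intro s hs s' hs' hne
      by_cases h1 : s = t
      · subst h1
        rw [hu2ne s' (fun hh => hne hh.symm)]
        exact hdisj_t s' hs' (fun hh => hne hh.symm)
      · by_cases h2 : s' = t
        · subst h2
          rw [hu2ne s h1]
          exact (hdisj_t s hs h1).symm
        · rw [hu2ne s h1, hu2ne s' h2]
          exact hu.2 s (hlp2 hs) s' (hlp2 hs') hne
  -- the span of the new subspace is contained in the old one
  have hspan : spanU D2 u2 ⊆ spanU D u := by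
    rintro W ⟨⟨Γ, hΓ, rfl⟩, hmin⟩
    refine ⟨⟨(Γ \ {t}) ∪ (⋃ (_ : t ∈ Γ), ({t} ∪ (Subtype.val '' Aset))), ?_, ?_⟩, hmin⟩
    · rintro s (hs | hs)
      · exact hlp2 (hΓ hs.1)
      · simp only [Set.mem_iUnion] at hs
        obtain ⟨htΓ, hs⟩ := hs
        rcases hs with rfl | ⟨a, haA, rfl⟩
        · exact htD
        · exact a.2.1
    · ext y
      simp only [Set.mem_iUnion]
      constructor
      · rintro ⟨s, hsΓ, hy⟩
        by_cases hst : s = t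
        · subst hst
          rw [hu2t] at hy
          rcases hy with hy | hy
          · exact ⟨s, Or.inr (Set.mem_iUnion.mpr ⟨hsΓ, Or.inl rfl⟩), hy⟩
          · obtain ⟨a, haA, hya⟩ := Set.mem_iUnion₂.mp hy
            exact ⟨a.1, Or.inr (Set.mem_iUnion.mpr ⟨hsΓ, Or.inr ⟨a, haA, rfl⟩⟩), hya⟩
        · rw [hu2ne s hst] at hy
          exact ⟨s, Or.inl ⟨hsΓ, hst⟩, hy⟩
      · rintro ⟨s, hs', hy⟩
        rcases hs' with ⟨hsΓ, hst⟩ | hs'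
        · refine ⟨s, hsΓ, ?_⟩
          rw [hu2ne s hst]
          exact hy
        · simp only [Set.mem_iUnion] at hs'
          obtain ⟨htΓ, hs'⟩ := hs'
          rcases hs' with rfl | ⟨a, haA, rfl⟩
          · exact ⟨s, htΓ, by rw [hu2t]; exact Or.inl hy⟩
          · exact ⟨t, htΓ, by rw [hu2t]; exact Or.inr (Set.mem_iUnion₂.mpr ⟨a, haA, hy⟩)⟩
  have hupto : ∀ s ∈ lprodUpto D n, u2 s = u s := by
    rintro s ⟨hsD, k, hkn, hlev⟩
    apply hu2ne
    rintro rfl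
    rw [hlevt] at hlev
    have := hLmono.injective hlev
    omega
  -- the colour of every span member with minimum t is γ
  have hcolor : ∀ W ∈ spanU D2 u2, isMinOf t W → c W = γ := by
    rintro W ⟨⟨Γ, hΓ, rfl⟩, -⟩ hmin
    have hu2mem : ∀ s ∈ lprod D2, s ∈ u2 s := fun s hs => (hu2sub.1 s hs).1
    have hcone : ∀ s ∈ Γ, lpLE t s := by
      intro s hsΓ
      exact hmin.2 s (Set.mem_iUnion₂.mpr ⟨s, hsΓ, hu2mem s (hΓ hsΓ)⟩)
    have htΓ : t ∈ Γ := by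
      obtain ⟨s, hsin, hts⟩ := Set.mem_iUnion₂.mp hmin.1
      by_cases hst : s = t
      · rwa [hst] at hsin
      · exfalso
        rw [hu2ne s hst] at hts
        have h1 : lpLE s t := (humin s (hlp2 (hΓ hsin))).2 t hts
        exact hst (lpLE_antisymm h1 (hcone s hsin))
    set z : ConeIdx D t → Bool :=
      fun a => if a ∈ Fs then (if a.1 ∈ Γ then true else false) else x a with hzdef
    have hz : ∀ a : ConeIdx D t, (∀ m, a ∉ Lev (ℓ m)) → z a = x a := by
      intro a ha
      have haF : a ∉ Fs := fun hh => by
        obtain ⟨m, hm⟩ := hh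
        exact ha m hm
      simp only [hzdef]
      rw [if_neg haF]
    obtain ⟨hExt, hUall⟩ := hmain z hz
    have hcz : c (Φ z) = γ := hkey z hExt hUall
    have hWz : (⋃ s ∈ Γ, u2 s) = Φ z := by
      ext y
      rw [hΦ]
      show _ ↔ (y ∈ u t ∨ ∃ a : ConeIdx D t, z a = true ∧ y ∈ u a.1)
      simp only [Set.mem_iUnion]
      constructor
      · rintro ⟨s, hsΓ, hy⟩
        by_cases hst : s = t
        · subst hst
          rw [hu2t] at hy
          rcases hy with hy | hy
          · exact Or.inl hy
          · obtain ⟨a, haA, hya⟩ := Set.mem_iUnion₂.mp hy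
            refine Or.inr ⟨a, ?_, hya⟩
            simp only [hzdef]
            rw [if_neg haA.1]
            exact haA.2
        · rw [hu2ne s hst] at hy
          have hamem : (⟨s, hlp2 (hΓ hsΓ), hcone s hsΓ, hst⟩ : ConeIdx D t) ∈ Fs :=
            hconeF _ (hΓ hsΓ)
          refine Or.inr ⟨⟨s, hlp2 (hΓ hsΓ), hcone s hsΓ, hst⟩, ?_, hy⟩
          simp only [hzdef]
          exact (if_pos hamem).trans (if_pos hsΓ)
      · rintro (hy | ⟨a, hza, hya⟩)
        · refine ⟨t, htΓ, ?_⟩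
          rw [hu2t]
          exact Or.inl hy
        · by_cases haF : a ∈ Fs
          · have haΓ : a.1 ∈ Γ := by
              by_contra hcon
              simp only [hzdef] at hza
              rw [if_pos haF, if_neg hcon] at hza
              exact Bool.false_ne_true hza
            refine ⟨a.1, haΓ, ?_⟩
            rw [hu2ne a.1 a.2.2.2]
            exact hya
          · have hax : x a = true := by
              simp only [hzdef] at hza
              rwa [if_neg haF] at hza
            refine ⟨t, htΓ, ?_⟩
            rw [hu2t]
            exact Or.inr (Set.mem_iUnion₂.mpr ⟨a, ⟨haF, hax⟩, hya⟩)
    rw [hWz]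
    exact hcz
  refine ⟨D2, u2, hsub2, hD2dense, hu2sub, hrestr, hspan, hupto, ?_⟩
  intro W hW W' hW' hm hm'
  rw [hcolor W hW hm, hcolor W' hW' hm']
end
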